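/- arXiv:0912.1185 — 5 statements merged into one kernel-verified Lean document; each statement's English description precedes it below -/
import Mathlib

section
/- Let A ∈ ℂ^{m×n}, b ∈ ℂ^m, μ > 0, β > 0, and let τ, γ > 0 satisfy τ·λ_max + γ < 2, where λ_max is the largest eigenvalue of A*A. Consider the primal alternating direction iteration: given (x^k, y^k), set r^{k+1} = (μβ/(1+μβ))·(y^k/β − (A x^k − b)), then g^k = A*(A x^k + r^{k+1} − b − y^k/β), then x^{k+1} = Shrink(x^k − τ g^k, τ/β), then y^{k+1} = y^k − γβ(A x^{k+1} + r^{k+1} − b). Then for any starting point (x^0, y^0), the sequence (r^k, x^k, y^k) converges to a limit (r̃, x̃, ỹ), where (r̃, x̃) is a solution of the problem min over (x, r) ∈ ℂ^n × ℂ^m of ‖x‖₁ + (1/(2μ))‖r‖₂² subject to A x + r = b. -/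
open Filter Topology Matrix Finset

noncomputable def l1 {ι : Type*} [Fintype ι] (v : ι → ℂ) : ℝ := ∑ i, ‖v i‖

noncomputable def l2sq {ι : Type*} [Fintype ι] (v : ι → ℂ) : ℝ := ∑ i, (‖v i‖)^2

noncomputable def l2 {ι : Type*} [Fintype ι] (v : ι → ℂ) : ℝ := Real.sqrt (l2sq v)

noncomputable def linf {ι : Type*} [Fintype ι] (v : ι → ℂ) : ℝ := ⨆ i, ‖v i‖

noncomputable def csign (w : ℂ) : ℂ := if w = 0 then 0 else w / (‖w‖ : ℂ)

noncomputable def shrink {ι : Type*} [Fintype ι] (z : ι → ℂ) (ν : ℝ) : ι → ℂ :=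
  fun i => ((max (‖z i‖ - ν) 0 : ℝ) : ℂ) * csign (z i)

noncomputable def reInner {ι : Type*} [Fintype ι] (y v : ι → ℂ) : ℝ :=
  (∑ i, (starRingEnd ℂ) (y i) * v i).re

noncomputable def projBall {ι : Type*} [Fintype ι] (t : ℝ) (v : ι → ℂ) : ι → ℂ :=
  if l2 v ≤ t then v else (t / l2 v) • v

noncomputable def projBox {ι : Type*} [Fintype ι] (v : ι → ℂ) : ι → ℂ :=
  fun i => if ‖v i‖ ≤ 1 then v i else v i / (‖v i‖ : ℂ)

noncomputable def lmax {m n : ℕ} (A : Matrix (Fin m) (Fin n) ℂ) : ℝ :=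
  ⨆ i, (Matrix.isHermitian_conjTranspose_mul_self A).eigenvalues i

section Toolkit
variable {ι : Type*} [Fintype ι]

lemma reInner_eq_sum (y v : ι → ℂ) :
    reInner y v = ∑ i, ((y i).re * (v i).re + (y i).im * (v i).im) := by
  simp [reInner, Complex.re_sum, Complex.mul_re]

lemma l2sq_eq_sum (v : ι → ℂ) : l2sq v = ∑ i, ((v i).re^2 + (v i).im^2) := by
  simp only [l2sq]
  congr 1; ext i
  rw [Complex.sq_norm, Complex.normSq_apply]; ring

lemma l2sq_nonneg (v : ι → ℂ) : 0 ≤ l2sq v :=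
  Finset.sum_nonneg fun i _ => sq_nonneg _

lemma coord_sq_le_l2sq (v : ι → ℂ) (i : ι) : (‖v i‖)^2 ≤ l2sq v :=
  Finset.single_le_sum (f := fun i => (‖v i‖)^2)
    (fun j _ => sq_nonneg _) (Finset.mem_univ i)

lemma reInner_comm (a b : ι → ℂ) : reInner a b = reInner b a := by
  simp only [reInner_eq_sum]; congr 1; ext i; ring

lemma reInner_self (a : ι → ℂ) : reInner a a = l2sq a := by
  simp only [reInner_eq_sum, l2sq_eq_sum]; congr 1; ext i; ring

lemma reInner_add_left (a b c : ι → ℂ) :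
    reInner (a + b) c = reInner a c + reInner b c := by
  simp only [reInner_eq_sum, Pi.add_apply, Complex.add_re, Complex.add_im, ← Finset.sum_add_distrib]
  congr 1; ext i; ring

lemma reInner_add_right (a b c : ι → ℂ) :
    reInner a (b + c) = reInner a b + reInner a c := by
  rw [reInner_comm, reInner_add_left, reInner_comm b a, reInner_comm c a]

lemma reInner_smul_left (t : ℝ) (a b : ι → ℂ) :
    reInner (t • a) b = t * reInner a b := by
  simp only [reInner_eq_sum, Pi.smul_apply, Complex.real_smul, Complex.mul_re, Complex.mul_im,
    Complex.ofReal_re, Complex.ofReal_im, Finset.mul_sum]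
  congr 1; ext i; ring

lemma reInner_smul_right (t : ℝ) (a b : ι → ℂ) :
    reInner a (t • b) = t * reInner a b := by
  rw [reInner_comm, reInner_smul_left, reInner_comm]

lemma reInner_neg_left (a b : ι → ℂ) : reInner (-a) b = - reInner a b := by
  simp only [reInner_eq_sum, Pi.neg_apply, Complex.neg_re, Complex.neg_im]
  rw [← Finset.sum_neg_distrib]; congr 1; ext i; ring

lemma reInner_neg_right (a b : ι → ℂ) : reInner a (-b) = - reInner a b := by
  rw [reInner_comm, reInner_neg_left, reInner_comm]

lemma reInner_sub_left (a b c : ι → ℂ) :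
    reInner (a - b) c = reInner a c - reInner b c := by
  rw [sub_eq_add_neg, reInner_add_left, reInner_neg_left]; ring

lemma reInner_sub_right (a b c : ι → ℂ) :
    reInner a (b - c) = reInner a b - reInner a c := by
  rw [reInner_comm, reInner_sub_left, reInner_comm b a, reInner_comm c a]

lemma l2sq_add (a b : ι → ℂ) : l2sq (a + b) = l2sq a + 2 * reInner a b + l2sq b := by
  rw [← reInner_self, reInner_add_left, reInner_add_right, reInner_add_right,
    reInner_self, reInner_self, reInner_comm b a]; ring

lemma l2sq_sub (a b : ι → ℂ) : l2sq (a - b) = l2sq a - 2 * reInner a b + l2sq b := by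
  rw [← reInner_self, reInner_sub_left, reInner_sub_right, reInner_sub_right,
    reInner_self, reInner_self, reInner_comm b a]; ring

lemma l2sq_smul (t : ℝ) (a : ι → ℂ) : l2sq (t • a) = t^2 * l2sq a := by
  rw [← reInner_self, reInner_smul_left, reInner_smul_right, reInner_self]; ring

end Toolkit

section ShrinkProx
variable {ι : Type*} [Fintype ι]

lemma abs_csign_le_one (w : ℂ) : ‖csign w‖ ≤ 1 := by
  unfold csign
  split_ifs with h
  · simp
  · rw [norm_div, Complex.norm_real, Real.norm_eq_abs, abs_of_nonneg (norm_nonneg w), div_self (by simpa using h)]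

lemma conj_csign_mul_self (w : ℂ) : (starRingEnd ℂ) (csign w) * w = (‖w‖ : ℂ) := by
  unfold csign
  split_ifs with h
  · simp [h]
  · have habs : (‖w‖ : ℂ) ≠ 0 := by simpa using h
    field_simp
    rw [map_div₀, Complex.conj_ofReal, ← mul_div_assoc, Complex.mul_conj,
      Complex.normSq_eq_norm_sq, Complex.ofReal_pow, pow_two, mul_div_assoc, div_self habs, mul_one]

lemma re_conj_mul_le (a u : ℂ) : ((starRingEnd ℂ) a * u).re ≤ ‖a‖ * ‖u‖ := by
  calc ((starRingEnd ℂ) a * u).re ≤ ‖(starRingEnd ℂ) a * u‖ := Complex.re_le_norm _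
  _ = ‖a‖ * ‖u‖ := by rw [norm_mul, Complex.norm_conj]

/-- scalar prox inequality for shrink -/
lemma shrink_scalar_prox (z : ℂ) (ν : ℝ) (hν : 0 ≤ ν) (u : ℂ) :
    ν * ‖((max (‖z‖ - ν) 0 : ℝ) : ℂ) * csign z‖
      + ((starRingEnd ℂ) (z - ((max (‖z‖ - ν) 0 : ℝ) : ℂ) * csign z)
          * (u - ((max (‖z‖ - ν) 0 : ℝ) : ℂ) * csign z)).re
      ≤ ν * ‖u‖ := by
  set p : ℂ := ((max (‖z‖ - ν) 0 : ℝ) : ℂ) * csign z with hp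
  rcases le_or_gt (‖z‖) ν with h | h
  · have hm : max (‖z‖ - ν) 0 = 0 := max_eq_right (by linarith)
    have hp0 : p = 0 := by rw [hp, hm]; simp
    rw [hp0]
    simp only [sub_zero, map_zero, zero_mul, add_zero, mul_zero, norm_zero]
    have h1 : ((starRingEnd ℂ) z * u).re ≤ ‖z‖ * ‖u‖ := re_conj_mul_le z u
    have h2 : ‖z‖ * ‖u‖ ≤ ν * ‖u‖ :=
      mul_le_mul_of_nonneg_right h (norm_nonneg u)
    linarith
  · have hz : z ≠ 0 := by
      intro h0; rw [h0] at h; simp at h; linarith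
    have hm : max (‖z‖ - ν) 0 = ‖z‖ - ν := max_eq_left (by linarith)
    have habsp : ‖p‖ = ‖z‖ - ν := by
      rw [hp, norm_mul, Complex.norm_real, Real.norm_eq_abs, hm, abs_of_nonneg (by linarith)]
      unfold csign
      rw [if_neg hz, norm_div, Complex.norm_real, Real.norm_eq_abs, abs_of_nonneg (norm_nonneg z),
        div_self (by simpa using hz), mul_one]
    have hzp : z - p = (ν : ℂ) * csign z := by
      rw [hp, hm]
      have : z = ((‖z‖ : ℝ) : ℂ) * csign z := by
        unfold csign
        rw [if_neg hz, mul_div_assoc', mul_comm, mul_div_assoc,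
          div_self (by simpa using hz), mul_one]
      calc z - ((‖z‖ - ν : ℝ) : ℂ) * csign z
          = ((‖z‖ : ℝ) : ℂ) * csign z - ((‖z‖ - ν : ℝ) : ℂ) * csign z := by
            rw [← this]
        _ = (ν : ℂ) * csign z := by push_cast; ring
    have hconjp : ((starRingEnd ℂ) (csign z) * p).re = ‖z‖ - ν := by
      rw [hp]
      have : (starRingEnd ℂ) (csign z) * (((max (‖z‖ - ν) 0 : ℝ) : ℂ) * csign z)
          = ((max (‖z‖ - ν) 0 : ℝ) : ℂ) * ((starRingEnd ℂ) (csign z) * csign z) := by ring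
      rw [this]
      have hcs : (starRingEnd ℂ) (csign z) * csign z = ((‖csign z‖)^2 : ℝ) := by
        rw [mul_comm, Complex.mul_conj, Complex.normSq_eq_norm_sq]
      have habscs : ‖csign z‖ = 1 := by
        unfold csign
        rw [if_neg hz, norm_div, Complex.norm_real, Real.norm_eq_abs, abs_of_nonneg (norm_nonneg z),
          div_self (by simpa using hz)]
      rw [hcs, habscs, hm]
      norm_num
    rw [hzp, habsp]
    have hexp : ((starRingEnd ℂ) ((ν:ℂ) * csign z) * (u - p)).re
        = ν * ((starRingEnd ℂ) (csign z) * u).re - ν * (‖z‖ - ν) := by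
      have : (starRingEnd ℂ) ((ν:ℂ) * csign z) * (u - p)
          = (ν:ℂ) * ((starRingEnd ℂ) (csign z) * u) - (ν:ℂ) * ((starRingEnd ℂ) (csign z) * p) := by
        rw [_root_.map_mul]
        have : (starRingEnd ℂ) ((ν:ℝ):ℂ) = ((ν:ℝ):ℂ) := Complex.conj_ofReal ν
        rw [this]; ring
      rw [this, Complex.sub_re]
      rw [Complex.re_ofReal_mul, Complex.re_ofReal_mul, hconjp]
    rw [hexp]
    have hb : ((starRingEnd ℂ) (csign z) * u).re ≤ ‖u‖ := by
      calc ((starRingEnd ℂ) (csign z) * u).re ≤ ‖csign z‖ * ‖u‖ :=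
        re_conj_mul_le _ _
      _ ≤ 1 * ‖u‖ := mul_le_mul_of_nonneg_right (abs_csign_le_one z) (norm_nonneg u)
      _ = ‖u‖ := one_mul _
    nlinarith [norm_nonneg u]

/-- vector prox inequality for shrink -/
lemma shrink_prox (z : ι → ℂ) (ν : ℝ) (hν : 0 ≤ ν) (u : ι → ℂ) :
    ν * l1 (shrink z ν) + reInner (z - shrink z ν) (u - shrink z ν) ≤ ν * l1 u := by
  simp only [l1, reInner, Finset.mul_sum, Complex.re_sum]
  rw [← Finset.sum_add_distrib]
  apply Finset.sum_le_sum
  intro i _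
  simpa [shrink] using shrink_scalar_prox (z i) ν hν (u i)

end ShrinkProx
section MatrixLemmas
variable {m n : ℕ}

lemma reInner_mulVec (A : Matrix (Fin m) (Fin n) ℂ) (u : Fin n → ℂ) (v : Fin m → ℂ) :
    reInner (A.mulVec u) v = reInner u (Aᴴ.mulVec v) := by
  unfold reInner
  congr 1
  calc ∑ i, (starRingEnd ℂ) (A.mulVec u i) * v i
      = ∑ i, ∑ j, (starRingEnd ℂ) (A i j) * (starRingEnd ℂ) (u j) * v i := by
        apply Finset.sum_congr rfl; intro i _
        rw [Matrix.mulVec, dotProduct, map_sum, Finset.sum_mul]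
        apply Finset.sum_congr rfl; intro j _
        rw [_root_.map_mul]
    _ = ∑ j, (starRingEnd ℂ) (u j) * (Aᴴ.mulVec v j) := by
        rw [Finset.sum_comm]
        apply Finset.sum_congr rfl; intro j _
        rw [Matrix.mulVec, dotProduct, Finset.mul_sum]
        apply Finset.sum_congr rfl; intro i _
        rw [Matrix.conjTranspose_apply]
        simp only [← starRingEnd_apply]
        ring

lemma lmax_nonneg (A : Matrix (Fin m) (Fin n) ℂ) : 0 ≤ lmax A := by
  rcases Nat.eq_zero_or_pos n with h | h
  · subst h
    unfold lmax
    rw [iSup_of_empty', Real.sSup_empty]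
  · have i0 : Fin n := ⟨0, h⟩
    calc (0:ℝ) ≤ (Matrix.isHermitian_conjTranspose_mul_self A).eigenvalues i0 :=
          Matrix.eigenvalues_conjTranspose_mul_self_nonneg A i0
    _ ≤ lmax A :=
        le_ciSup (f := (Matrix.isHermitian_conjTranspose_mul_self A).eigenvalues)
          ((Set.finite_range _).bddAbove) i0
lemma eigenvalues_le_lmax (A : Matrix (Fin m) (Fin n) ℂ) (i : Fin n) :
    (Matrix.isHermitian_conjTranspose_mul_self A).eigenvalues i ≤ lmax A :=
  le_ciSup ((Set.finite_range _).bddAbove) i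

lemma l2sq_mulVec_le (A : Matrix (Fin m) (Fin n) ℂ) (u : Fin n → ℂ) :
    l2sq (A.mulVec u) ≤ lmax A * l2sq u := by
  classical
  set hB := Matrix.isHermitian_conjTranspose_mul_self A with hhB
  set U : Matrix (Fin n) (Fin n) ℂ := (hB.eigenvectorUnitary : Matrix (Fin n) (Fin n) ℂ) with hU
  set w : Fin n → ℂ := (star U).mulVec u with hw
  -- l2sq (A u) = re (star u ⬝ᵥ (AᴴA) u)
  have h1 : l2sq (A.mulVec u) = reInner u ((Aᴴ * A).mulVec u) := by
    rw [← reInner_self, reInner_mulVec, Matrix.mulVec_mulVec]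
  -- star u ⬝ᵥ (AᴴA) u = ∑ λ i * |w i|^2
  have hBdecomp : (Aᴴ * A) = U * (Matrix.diagonal (RCLike.ofReal ∘ hB.eigenvalues)) * star U :=
    hB.spectral_theorem
  have hUw : reInner u ((Aᴴ * A).mulVec u)
      = reInner w ((Matrix.diagonal (RCLike.ofReal ∘ hB.eigenvalues)).mulVec w) := by
    conv_lhs => rw [hBdecomp]
    rw [← Matrix.mulVec_mulVec, ← Matrix.mulVec_mulVec]
    have hadj : ∀ (M : Matrix (Fin n) (Fin n) ℂ) (a b : Fin n → ℂ),
        reInner a (M.mulVec b) = reInner (Mᴴ.mulVec a) b := by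
      intro M a b
      rw [reInner_mulVec, Matrix.conjTranspose_conjTranspose]
    rw [hadj U u _]
    have : Uᴴ = star U := rfl
    rw [this, ← hw]
  have hdiag : reInner w ((Matrix.diagonal (RCLike.ofReal ∘ hB.eigenvalues)).mulVec w)
      = ∑ i, hB.eigenvalues i * (‖w i‖)^2 := by
    rw [reInner_eq_sum]
    apply Finset.sum_congr rfl; intro i _
    rw [Matrix.mulVec_diagonal]
    have : (RCLike.ofReal ∘ hB.eigenvalues) i = ((hB.eigenvalues i : ℝ) : ℂ) := rfl
    rw [this]
    rw [Complex.re_ofReal_mul]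
    have him : (((hB.eigenvalues i : ℝ) : ℂ) * w i).im = hB.eigenvalues i * (w i).im :=
      Complex.im_ofReal_mul _ _
    rw [him, Complex.sq_norm, Complex.normSq_apply]
    ring
  -- norm preservation
  have hnorm : ∑ i, (‖w i‖)^2 = l2sq u := by
    have h0 : ∑ i, (‖w i‖)^2 = reInner w w := by rw [reInner_self]; rfl
    rw [h0, hw]
    have hstar : star U = Uᴴ := rfl
    rw [hstar, reInner_mulVec, Matrix.conjTranspose_conjTranspose, Matrix.mulVec_mulVec]
    have hUU : U * Uᴴ = 1 := by
      have := (Matrix.mem_unitaryGroup_iff).mp (hB.eigenvectorUnitary).2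
      exact this
    rw [hUU, Matrix.one_mulVec, reInner_self]
  have hfin : ∑ i, hB.eigenvalues i * (‖w i‖)^2
      ≤ lmax A * l2sq u := by
    rw [← hnorm, Finset.mul_sum]
    apply Finset.sum_le_sum
    intro i _
    apply mul_le_mul_of_nonneg_right _ (sq_nonneg _)
    exact eigenvalues_le_lmax A i
  rw [h1, hUw, hdiag]
  exact hfin
end MatrixLemmas
section Continuity
variable {ι : Type*} [Fintype ι] {κ : Type*} [Fintype κ]

lemma continuous_l1 : Continuous (l1 (ι := ι)) := by
  unfold l1
  exact continuous_finset_sum _ fun i _ => continuous_norm.comp (continuous_apply i)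

lemma continuous_l2sq : Continuous (l2sq (ι := ι)) := by
  unfold l2sq
  exact continuous_finset_sum _ fun i _ =>
    ((continuous_norm.comp (continuous_apply i)).pow 2)

lemma continuous_reInner : Continuous (fun p : (ι → ℂ) × (ι → ℂ) => reInner p.1 p.2) := by
  simp only [reInner_eq_sum]
  apply continuous_finset_sum _ fun i _ => ?_
  have h1 : Continuous (fun p : (ι → ℂ) × (ι → ℂ) => p.1 i) :=
    (continuous_apply i).comp continuous_fst
  have h2 : Continuous (fun p : (ι → ℂ) × (ι → ℂ) => p.2 i) :=
    (continuous_apply i).comp continuous_snd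
  exact ((Complex.continuous_re.comp h1).mul (Complex.continuous_re.comp h2)).add
    ((Complex.continuous_im.comp h1).mul (Complex.continuous_im.comp h2))

lemma tendsto_reInner {f g : ℕ → ι → ℂ} {a c : ι → ℂ}
    (hf : Filter.Tendsto f Filter.atTop (nhds a)) (hg : Filter.Tendsto g Filter.atTop (nhds c)) :
    Filter.Tendsto (fun k => reInner (f k) (g k)) Filter.atTop (nhds (reInner a c)) := by
  simp only [reInner_eq_sum]
  apply tendsto_finset_sum
  intro i _
  have hfi : Filter.Tendsto (fun k => f k i) Filter.atTop (nhds (a i)) :=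
    tendsto_pi_nhds.mp hf i
  have hgi : Filter.Tendsto (fun k => g k i) Filter.atTop (nhds (c i)) :=
    tendsto_pi_nhds.mp hg i
  exact (((Complex.continuous_re.tendsto _).comp hfi).mul
    ((Complex.continuous_re.tendsto _).comp hgi)).add
    (((Complex.continuous_im.tendsto _).comp hfi).mul
    ((Complex.continuous_im.tendsto _).comp hgi))

lemma continuous_mulVec {m n : ℕ} (A : Matrix (Fin m) (Fin n) ℂ) :
    Continuous (fun v : Fin n → ℂ => A.mulVec v) := by
  apply continuous_pi
  intro i
  unfold Matrix.mulVec dotProduct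
  exact continuous_finset_sum _ fun j _ => continuous_const.mul (continuous_apply j)

/-- if l2sq of a sequence tends to zero, the sequence tends to zero in the product topology -/
lemma tendsto_of_l2sq_tendsto_zero {v : ℕ → ι → ℂ}
    (h : Filter.Tendsto (fun k => l2sq (v k)) Filter.atTop (nhds 0)) :
    Filter.Tendsto v Filter.atTop (nhds 0) := by
  rw [tendsto_pi_nhds]
  intro i
  rw [tendsto_iff_dist_tendsto_zero]
  simp only [Pi.zero_apply, Complex.dist_eq, sub_zero]
  have hsq : Filter.Tendsto (fun k => Real.sqrt (l2sq (v k))) Filter.atTop (nhds 0) := by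
    have := (Real.continuous_sqrt.tendsto 0).comp h
    simpa [Function.comp_def] using this
  apply squeeze_zero (fun k => norm_nonneg _) (fun k => ?_) hsq
  have h1 : (‖v k i‖)^2 ≤ l2sq (v k) := coord_sq_le_l2sq _ i
  calc ‖v k i‖ = Real.sqrt ((‖v k i‖)^2) := by
        rw [Real.sqrt_sq (norm_nonneg _)]
  _ ≤ Real.sqrt (l2sq (v k)) := Real.sqrt_le_sqrt h1

end Continuity

section KKT
variable {m n : ℕ}

lemma coord_le_l1 {ι : Type*} [Fintype ι] (v : ι → ℂ) (i : ι) : ‖v i‖ ≤ l1 v :=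
  Finset.single_le_sum (f := fun i => ‖v i‖)
    (fun j _ => norm_nonneg _) (Finset.mem_univ i)

lemma l1_nonneg {ι : Type*} [Fintype ι] (v : ι → ℂ) : 0 ≤ l1 v :=
  Finset.sum_nonneg fun i _ => norm_nonneg _

lemma l1_segment {ι : Type*} [Fintype ι] (a c : ι → ℂ) {t : ℝ} (h0 : 0 ≤ t) (h1 : t ≤ 1) :
    l1 (a + t • (c - a)) ≤ (1 - t) * l1 a + t * l1 c := by
  unfold l1
  rw [Finset.mul_sum, Finset.mul_sum, ← Finset.sum_add_distrib]
  apply Finset.sum_le_sum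
  intro i _
  have : (a + t • (c - a)) i = ((1 - t : ℝ) : ℂ) * a i + ((t : ℝ) : ℂ) * c i := by
    simp [Pi.smul_apply, Complex.real_smul]
    push_cast; ring
  rw [this]
  calc ‖((1 - t : ℝ) : ℂ) * a i + ((t : ℝ) : ℂ) * c i‖
      ≤ ‖((1 - t : ℝ) : ℂ) * a i‖ + ‖((t : ℝ) : ℂ) * c i‖ :=
        norm_add_le _ _
  _ = (1 - t) * ‖a i‖ + t * ‖c i‖ := by
      rw [norm_mul, norm_mul, Complex.norm_real, Real.norm_eq_abs, Complex.norm_real, Real.norm_eq_abs,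
        abs_of_nonneg (by linarith), abs_of_nonneg h0]
  _ ≤ (1 - t) * ‖a i‖ + t * ‖c i‖ := le_refl _

/-- existence of a KKT point for the QP problem -/
lemma exists_kkt (A : Matrix (Fin m) (Fin n) ℂ) (b : Fin m → ℂ) (μ : ℝ) (hμ : 0 < μ) :
    ∃ (xs : Fin n → ℂ) (ys : Fin m → ℂ),
      A.mulVec xs + μ • ys = b ∧
      (∀ u, l1 xs + reInner (Aᴴ.mulVec ys) (u - xs) ≤ l1 u) := by
  classical
  set F : (Fin n → ℂ) → ℝ := fun v => l1 v + (1/(2*μ)) * l2sq (b - A.mulVec v) with hF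
  have hFcont : Continuous F := by
    apply continuous_l1.add
    exact continuous_const.mul (continuous_l2sq.comp (continuous_const.sub (continuous_mulVec A)))
  have hF0 : 0 ≤ F 0 := by
    have h7 : F 0 = l1 (0 : Fin n → ℂ) + (1/(2*μ)) * l2sq (b - A.mulVec 0) := rfl
    have h6 := l2sq_nonneg (b - A.mulVec 0)
    have h1 : (0:ℝ) ≤ 1/(2*μ) := by positivity
    have h8 := l1_nonneg (0 : Fin n → ℂ)
    rw [h7]; nlinarith
  set c := F 0 with hc
  set S : Set (Fin n → ℂ) := {v | l1 v ≤ c} with hS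
  have hSclosed : IsClosed S := isClosed_le continuous_l1 continuous_const
  have hSsub : S ⊆ Metric.closedBall 0 c := by
    intro v hv
    rw [Metric.mem_closedBall, dist_zero_right]
    rw [pi_norm_le_iff_of_nonneg hF0]
    intro i
    calc ‖v i‖ = ‖v i‖ := rfl
    _ ≤ l1 v := coord_le_l1 v i
    _ ≤ c := hv
  have hScompact : IsCompact S :=
    (isCompact_closedBall 0 c).of_isClosed_subset hSclosed hSsub
  have hSne : S.Nonempty := ⟨0, by
    simp only [hS, Set.mem_setOf_eq]
    have : l1 (0 : Fin n → ℂ) = 0 := by simp [l1]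
    rw [this]; exact hF0⟩
  obtain ⟨xs, hxsS, hxsmin⟩ := hScompact.exists_isMinOn hSne hFcont.continuousOn
  have h0S : (0 : Fin n → ℂ) ∈ S := by
    simp only [hS, Set.mem_setOf_eq]
    have : l1 (0 : Fin n → ℂ) = 0 := by simp [l1]
    rw [this]; exact hF0
  have hmin : ∀ u, F xs ≤ F u := by
    intro u
    by_cases hu : u ∈ S
    · exact hxsmin hu
    · have h1 : c < l1 u := lt_of_not_ge hu
      have h2 : F xs ≤ F 0 := hxsmin h0S
      have h4 : l1 u ≤ F u := by
        have h6 := l2sq_nonneg (b - A.mulVec u)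
        have h5 : (0:ℝ) ≤ 1/(2*μ) := by positivity
        have : 0 ≤ (1/(2*μ)) * l2sq (b - A.mulVec u) := mul_nonneg h5 h6
        simp only [hF]; linarith
      have h3 : F 0 = c := rfl
      linarith
  -- define the multiplier
  set ys : Fin m → ℂ := (1/μ) • (b - A.mulVec xs) with hys
  have hfeas : A.mulVec xs + μ • ys = b := by
    funext i
    simp only [hys, Pi.add_apply, Pi.smul_apply, Pi.sub_apply, Complex.real_smul]
    push_cast
    have hμ0 : (μ:ℂ) ≠ 0 := by
      simp only [ne_eq, Complex.ofReal_eq_zero]; exact ne_of_gt hμ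
    field_simp
    ring
  have hbxs : b - A.mulVec xs = μ • ys := by
    rw [← hfeas]; funext i; simp only [Pi.sub_apply, Pi.add_apply]; ring
  refine ⟨xs, ys, hfeas, ?_⟩
  intro u
  set d : Fin n → ℂ := u - xs with hd
  set X : ℝ := reInner (Aᴴ.mulVec ys) d with hX
  set L0 : ℝ := l2sq (b - A.mulVec xs) with hL0
  set LAd : ℝ := l2sq (A.mulVec d) with hLAd
  have hXd : reInner (b - A.mulVec xs) (A.mulVec d) = μ * X := by
    rw [hbxs, reInner_smul_left, hX, reInner_comm, reInner_mulVec, reInner_comm]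
  have hkey : ∀ t : ℝ, 0 < t → t ≤ 1 → -(t/(2*μ)) * LAd ≤ l1 u - l1 xs - X := by
    intro t ht ht1
    have hFt := hmin (xs + t • d)
    have hAv : A.mulVec (xs + t • d) = A.mulVec xs + t • A.mulVec d := by
      rw [Matrix.mulVec_add, Matrix.mulVec_smul]
    have hsub : b - A.mulVec (xs + t • d) = (b - A.mulVec xs) - t • A.mulVec d := by
      rw [hAv]; funext i
      simp only [Pi.sub_apply, Pi.add_apply, Pi.smul_apply, Complex.real_smul]
      ring
    have hl2 : l2sq (b - A.mulVec (xs + t • d)) = L0 - 2*t*(μ*X) + t^2*LAd := by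
      rw [hsub, l2sq_sub, reInner_smul_right, hXd, l2sq_smul, hL0, hLAd]; ring
    have hl1 : l1 (xs + t • d) ≤ (1 - t) * l1 xs + t * l1 u :=
      l1_segment xs u ht.le ht1
    have hmain : l1 xs + (1/(2*μ)) * L0
        ≤ (1 - t) * l1 xs + t * l1 u + (1/(2*μ)) * (L0 - 2*t*(μ*X) + t^2*LAd) := by
      have hFxs : F xs = l1 xs + (1/(2*μ)) * L0 := rfl
      have hFtv : F (xs + t • d) = l1 (xs + t • d) + (1/(2*μ)) * l2sq (b - A.mulVec (xs + t • d)) := rfl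
      rw [hFxs, hFtv, hl2] at hFt
      have h5 : (0:ℝ) ≤ 1/(2*μ) := by positivity
      linarith
    have hexp : (1 - t) * l1 xs + t * l1 u + (1/(2*μ)) * (L0 - 2*t*(μ*X) + t^2*LAd)
        - (l1 xs + (1/(2*μ)) * L0) = t * ((l1 u - l1 xs - X) + (t/(2*μ)) * LAd) := by
      field_simp
      ring
    have h2 : 0 ≤ t * ((l1 u - l1 xs - X) + (t/(2*μ)) * LAd) := by
      rw [← hexp]; linarith
    have h3 : 0 ≤ (l1 u - l1 xs - X) + (t/(2*μ)) * LAd := nonneg_of_mul_nonneg_right h2 ht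
    linarith
  have hC : 0 ≤ LAd / (2*μ) :=
    div_nonneg (hLAd ▸ l2sq_nonneg (A.mulVec d)) (by positivity)
  have hlim : Filter.Tendsto (fun k : ℕ => -(1/((k:ℝ)+1)) * (LAd/(2*μ)))
      Filter.atTop (nhds 0) := by
    have h1 : Filter.Tendsto (fun k : ℕ => 1/((k:ℝ)+1)) Filter.atTop (nhds 0) :=
      tendsto_one_div_add_atTop_nhds_zero_nat
    have := (h1.neg).mul_const (LAd/(2*μ))
    simpa using this
  have hfinal : (0:ℝ) ≤ l1 u - l1 xs - X := by
    apply le_of_tendsto' hlim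
    intro k
    have hk1 : (0:ℝ) < 1/((k:ℝ)+1) := by positivity
    have hk2 : 1/((k:ℝ)+1) ≤ 1 := by
      rw [div_le_one (by positivity)]
      simp
    have := hkey (1/((k:ℝ)+1)) hk1 hk2
    calc -(1/((k:ℝ)+1)) * (LAd/(2*μ)) = -((1/((k:ℝ)+1))/(2*μ)) * LAd := by ring
    _ ≤ l1 u - l1 xs - X := this
  linarith
end KKT
section Key
variable {m n : ℕ}

set_option maxHeartbeats 2000000 in
lemma key_ineq (A : Matrix (Fin m) (Fin n) ℂ) (b : Fin m → ℂ)
    (μ β τ γ ρ : ℝ) (hμ : 0 < μ) (hβ : 0 < β) (hτ : 0 < τ) (hγ : 0 < γ) (hρ : 0 < ρ)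
    (xs : Fin n → ℂ) (ys : Fin m → ℂ)
    (hfeas : A.mulVec xs + μ • ys = b)
    (hsub : ∀ u, l1 xs + reInner (Aᴴ.mulVec ys) (u - xs) ≤ l1 u)
    (xk x' : Fin n → ℂ) (rk yk y' : Fin m → ℂ)
    (hrk : rk = (μ * β / (1 + μ * β)) • ((1/β) • yk - (A.mulVec xk - b)))
    (hxk : x' = shrink (xk - τ • (Aᴴ.mulVec (A.mulVec xk + rk - b - (1/β) • yk))) (τ/β))
    (hyk : y' = yk - (γ * β) • (A.mulVec x' + rk - b)) :
    (β/τ) * l2sq (x' - xs) + (1/(γ*β)) * l2sq (y' - ys)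
      + (β*(1/τ - ρ * lmax A)) * l2sq (xk - x')
      + (β*(2 - γ - 1/ρ)) * l2sq (A.mulVec x' + rk - b)
      + (2/μ) * l2sq (rk - μ • ys)
      ≤ (β/τ) * l2sq (xk - xs) + (1/(γ*β)) * l2sq (yk - ys) := by
  have hμβ : (0:ℝ) < 1 + μ * β := by positivity
  have hμc : ((μ:ℝ):ℂ) ≠ 0 := Complex.ofReal_ne_zero.mpr (ne_of_gt hμ)
  have hβc : ((β:ℝ):ℂ) ≠ 0 := Complex.ofReal_ne_zero.mpr (ne_of_gt hβ)
  have hμβc : (1 + (μ:ℂ) * (β:ℂ)) ≠ 0 := by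
    have := Complex.ofReal_ne_zero.mpr (ne_of_gt hμβ)
    push_cast at this
    convert this using 2 <;> norm_cast
  set lam : ℝ := lmax A with hlam
  -- cleared-denominator componentwise form of the r-update
  have hrki : ∀ i, (1 + (μ:ℂ)*(β:ℂ)) * rk i
      = (μ:ℂ) * yk i - (μ:ℂ)*(β:ℂ) * ((A.mulVec xk) i - b i) := by
    intro i
    have hi := congrFun hrk i
    simp only [Pi.smul_apply, Pi.sub_apply, Complex.real_smul] at hi
    push_cast at hi
    rw [hi]
    field_simp
  set e : Fin n → ℂ := xk - x' with he
  set dx : Fin n → ℂ := xk - xs with hdx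
  set dx' : Fin n → ℂ := x' - xs with hdx'
  set dr : Fin m → ℂ := rk - μ • ys with hdr
  set s : Fin m → ℂ := A.mulVec x' + rk - b with hss
  have hAes : A.mulVec e + s = A.mulVec xk + rk - b := by
    rw [he, hss, Matrix.mulVec_sub]
    funext i
    simp only [Pi.add_apply, Pi.sub_apply]
    ring
  have hs : s = A.mulVec dx' + dr := by
    rw [hss, hdx', hdr, Matrix.mulVec_sub, ← hfeas]
    funext i
    simp only [Pi.add_apply, Pi.sub_apply]
    ring
  have hdy' : μ • (yk - ys) = dr + (μ*β) • (A.mulVec e + s) := by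
    rw [hAes, hdr]
    funext i
    simp only [Pi.add_apply, Pi.sub_apply, Pi.smul_apply, Complex.real_smul]
    push_cast
    linear_combination (-1 : ℂ) * hrki i
  have hy' : y' - ys = (yk - ys) - (γ*β) • s := by
    rw [hyk]
    funext i
    simp only [Pi.sub_apply, Pi.smul_apply]
    ring
  clear_value lam e dx dx' dr s
  -- abbreviations for real quantities
  set Dx : ℝ := l2sq dx with hDx
  set Dx2 : ℝ := l2sq dx' with hDx2
  set Ee : ℝ := l2sq e with hEe
  set Ss : ℝ := l2sq s with hSs
  set Rr : ℝ := l2sq dr with hRr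
  set I1 : ℝ := reInner (yk - ys) s with hI1
  set I3 : ℝ := reInner dr (A.mulVec dx') with hI3
  set I4 : ℝ := reInner (A.mulVec e) s with hI4
  set Xx : ℝ := l2sq (A.mulVec e) with hXx
  clear_value Dx Dx2 Ee Ss Rr I1 I3 I4 Xx
  -- T1
  have T1 : (1/(γ*β)) * l2sq (y' - ys) = (1/(γ*β)) * l2sq (yk - ys) - 2*I1 + (γ*β)*Ss := by
    rw [hy', l2sq_sub, reInner_smul_right, l2sq_smul, ← hI1, ← hSs]
    field_simp
  -- T3 : I1 decomposition
  have h2 : reInner dr s = I3 + Rr := by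
    nth_rewrite 1 [hs]
    rw [reInner_add_right, reInner_self, ← hI3, ← hRr]
  have hμI1 : μ * I1 = (I3 + Rr) + (μ*β) * I4 + (μ*β) * Ss := by
    have h0 : reInner (μ • (yk - ys)) s = reInner (dr + (μ*β) • (A.mulVec e + s)) s := by
      rw [hdy']
    rw [reInner_smul_left, reInner_add_left, reInner_smul_left, reInner_add_left,
      reInner_self, ← hI1, ← hI4, ← hSs, h2] at h0
    linarith [h0]
  have T3 : I1 = (1/μ)*I3 + (1/μ)*Rr + β*I4 + β*Ss := by
    field_simp
    linarith [hμI1]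
  -- T2 : prox + subgradient combination
  have T2 : (β/τ) * (Dx2 + Ee - Dx) ≤ (2/μ) * I3 := by
    set g : Fin n → ℂ := Aᴴ.mulVec (A.mulVec xk + rk - b - (1/β) • yk) with hg
    set z : Fin n → ℂ := xk - τ • g with hz
    have hτβ : (0:ℝ) < τ/β := by positivity
    have hP1 : (τ/β) * l1 x' + reInner (z - x') (xs - x') ≤ (τ/β) * l1 xs := by
      have h5 := shrink_prox z (τ/β) hτβ.le xs
      rw [← hxk] at h5
      exact h5
    have hP2' : (τ/β) * (l1 xs + reInner (Aᴴ.mulVec ys) (x' - xs)) ≤ (τ/β) * l1 x' :=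
      mul_le_mul_of_nonneg_left (hsub x') hτβ.le
    have hcomb : reInner (z - x') (xs - x') + (τ/β) * reInner (Aᴴ.mulVec ys) (x' - xs) ≤ 0 := by
      nlinarith [hP1, hP2']
    -- the vector w in the inner product
    have hwvec : A.mulVec xk + rk - b - (1/β) • yk + (1/β) • ys = (-(1/(μ*β))) • dr := by
      rw [hdr]
      funext i
      simp only [Pi.add_apply, Pi.sub_apply, Pi.smul_apply, Complex.real_smul]
      push_cast
      have hi := hrki i
      field_simp
      linear_combination hi
    have hw : g + (1/β) • (Aᴴ.mulVec ys) = (-(1/(μ*β))) • (Aᴴ.mulVec dr) := by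
      rw [hg, ← Matrix.mulVec_smul, ← Matrix.mulVec_add, hwvec, Matrix.mulVec_smul]
    have hzx : z - x' = e - τ • g := by
      rw [hz, he]
      funext i
      simp only [Pi.sub_apply, Pi.smul_apply]
      ring
    have hyssym : reInner (Aᴴ.mulVec ys) (x' - xs) = - reInner (Aᴴ.mulVec ys) (xs - x') := by
      rw [← reInner_neg_right]
      congr 1
      funext i; simp only [Pi.neg_apply, Pi.sub_apply]; ring
    have hsplit : reInner (z - x') (xs - x') + (τ/β) * reInner (Aᴴ.mulVec ys) (x' - xs)
        = reInner e (xs - x') - τ * reInner (g + (1/β) • (Aᴴ.mulVec ys)) (xs - x') := by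
      rw [hzx, reInner_sub_left, reInner_smul_left, reInner_add_left, reInner_smul_left,
        hyssym]
      field_simp
      ring
    have hwval : reInner (g + (1/β) • (Aᴴ.mulVec ys)) (xs - x') = (1/(μ*β)) * I3 := by
      rw [hw, reInner_smul_left]
      have h5 : reInner (Aᴴ.mulVec dr) (xs - x') = reInner dr (A.mulVec (xs - x')) := by
        rw [reInner_mulVec, Matrix.conjTranspose_conjTranspose]
      rw [h5]
      have h6 : A.mulVec (xs - x') = - A.mulVec dx' := by
        rw [hdx', Matrix.mulVec_sub, Matrix.mulVec_sub]
        funext i; simp only [Pi.neg_apply, Pi.sub_apply]; ring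
      rw [h6, reInner_neg_right, ← hI3]
      ring
    have hEq : reInner e (xs - x') = - reInner e dx' := by
      rw [← reInner_neg_right]
      congr 1
      funext i; rw [hdx']; simp only [Pi.neg_apply, Pi.sub_apply]; ring
    have hineq : - reInner e dx' - (τ/(μ*β)) * I3 ≤ 0 := by
      have h7 := hcomb
      rw [hsplit, hwval, hEq] at h7
      have heq2 : - reInner e dx' - τ * ((1/(μ*β)) * I3) = - reInner e dx' - (τ/(μ*β)) * I3 := by
        ring
      linarith [h7, heq2.le, heq2.ge]
    have hpol : Dx = Ee + 2 * reInner e dx' + Dx2 := by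
      rw [hDx, hEe, hDx2]
      have h8 : dx = e + dx' := by
        rw [hdx, he, hdx']
        funext i; simp only [Pi.add_apply, Pi.sub_apply]; ring
      rw [h8, l2sq_add]
    have hfin : Dx2 + Ee - Dx ≤ (2*τ/(μ*β)) * I3 := by ring_nf at hineq ⊢; linarith [hineq, hpol]
    calc (β/τ) * (Dx2 + Ee - Dx) ≤ (β/τ) * ((2*τ/(μ*β)) * I3) := by
          apply mul_le_mul_of_nonneg_left hfin (by positivity)
    _ = (2/μ) * I3 := by field_simp
  -- T4 : Cauchy-Schwarz + spectral bound
  have T4 : -(2*β*I4) ≤ (β*ρ*lam) * Ee + (β/ρ) * Ss := by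
    have h0 : 0 ≤ l2sq (ρ • (A.mulVec e) + s) := l2sq_nonneg _
    rw [l2sq_add, l2sq_smul, reInner_smul_left, ← hXx, ← hI4, ← hSs] at h0
    have h8' : Xx ≤ lam * Ee := by rw [hXx, hEe, hlam]; exact l2sq_mulVec_le A e
    have hρXx : -(2*I4) ≤ ρ * Xx + (1/ρ) * Ss := by
      have h1 : (-(2*I4)) * ρ ≤ (ρ * Xx + (1/ρ) * Ss) * ρ := by
        have hfs : (ρ * Xx + (1/ρ) * Ss) * ρ = ρ^2 * Xx + Ss := by field_simp
        rw [hfs]; nlinarith [h0]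
      exact le_of_mul_le_mul_right h1 hρ
    have hscale : (-(2*I4)) * β ≤ (ρ * Xx + (1/ρ) * Ss) * β :=
      mul_le_mul_of_nonneg_right hρXx hβ.le
    have hXscale : (β*ρ) * Xx ≤ (β*ρ) * (lam * Ee) :=
      mul_le_mul_of_nonneg_left h8' (by positivity)
    ring_nf at hscale hXscale ⊢
    linarith [hscale, hXscale]
  -- final assembly
  ring_nf at T1 T2 T3 T4 ⊢
  linarith [T1, T2, T3, T4]
end Key
section Assembly

/-- helper: sup-norm bounded by sqrt of l2sq -/
lemma pinorm_le_sqrt_l2sq {ι : Type*} [Fintype ι] (v : ι → ℂ) : ‖v‖ ≤ Real.sqrt (l2sq v) := by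
  rw [pi_norm_le_iff_of_nonneg (Real.sqrt_nonneg _)]
  intro i
  calc ‖v i‖ = ‖v i‖ := rfl
  _ = Real.sqrt ((‖v i‖)^2) := by rw [Real.sqrt_sq (norm_nonneg _)]
  _ ≤ Real.sqrt (l2sq v) := Real.sqrt_le_sqrt (coord_sq_le_l2sq v i)

theorem padm_qp_convergence' {m n : ℕ} (A : Matrix (Fin m) (Fin n) ℂ) (b : Fin m → ℂ)
    (μ β τ γ : ℝ) (hμ : 0 < μ) (hβ : 0 < β) (hτ : 0 < τ) (hγ : 0 < γ)
    (hτγ : τ * lmax A + γ < 2)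
    (x : ℕ → Fin n → ℂ) (r : ℕ → Fin m → ℂ) (y : ℕ → Fin m → ℂ)
    (hr : ∀ k, r (k+1) = (μ * β / (1 + μ * β)) • ((1/β) • y k - (A.mulVec (x k) - b)))
    (hx : ∀ k, x (k+1) =
      shrink (x k - τ • (Aᴴ.mulVec (A.mulVec (x k) + r (k+1) - b - (1/β) • y k))) (τ/β))
    (hy : ∀ k, y (k+1) = y k - (γ * β) • (A.mulVec (x (k+1)) + r (k+1) - b)) :
    ∃ (rt : Fin m → ℂ) (xt : Fin n → ℂ) (yt : Fin m → ℂ),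
      Filter.Tendsto r Filter.atTop (nhds rt) ∧ Filter.Tendsto x Filter.atTop (nhds xt) ∧
      Filter.Tendsto y Filter.atTop (nhds yt) ∧
      A.mulVec xt + rt = b ∧
      ∀ (x' : Fin n → ℂ) (r' : Fin m → ℂ), A.mulVec x' + r' = b →
        l1 xt + (1/(2*μ)) * l2sq rt ≤ l1 x' + (1/(2*μ)) * l2sq r' := by
  classical
  obtain ⟨xs, ys, hfeas, hsub⟩ := exists_kkt A b μ hμ
  set lam : ℝ := lmax A with hlam
  have hlam0 : 0 ≤ lam := lmax_nonneg A
  have hτlam0 : 0 ≤ τ * lam := mul_nonneg hτ.le hlam0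
  have hc : (0:ℝ) < 2 - γ + τ*lam := by nlinarith
  set ρ : ℝ := 2/(2 - γ + τ*lam) with hρdef
  have hρ : 0 < ρ := by positivity
  have hδ1 : 0 < β*(1/τ - ρ*lam) := by
    apply mul_pos hβ
    have h1 : ρ*lam < 1/τ := by
      rw [hρdef, div_mul_eq_mul_div, div_lt_div_iff₀ hc (by positivity)]
      nlinarith
    linarith
  have hδ2 : 0 < β*(2 - γ - 1/ρ) := by
    apply mul_pos hβ
    have h1 : 1/ρ = (2 - γ + τ*lam)/2 := by
      rw [hρdef, one_div_div]
    rw [h1]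
    linarith
  set δ1 : ℝ := β*(1/τ - ρ*lam) with hδ1def
  set δ2 : ℝ := β*(2 - γ - 1/ρ) with hδ2def
  set rs : Fin m → ℂ := μ • ys with hrs
  -- the energy
  set E : ℕ → ℝ := fun k => (β/τ) * l2sq (x k - xs) + (1/(γ*β)) * l2sq (y k - ys) with hE
  have hkey : ∀ k, E (k+1) + δ1 * l2sq (x k - x (k+1))
      + δ2 * l2sq (A.mulVec (x (k+1)) + r (k+1) - b)
      + (2/μ) * l2sq (r (k+1) - μ • ys) ≤ E k := by
    intro k
    have := key_ineq A b μ β τ γ ρ hμ hβ hτ hγ hρ xs ys hfeas hsub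
      (x k) (x (k+1)) (r (k+1)) (y k) (y (k+1)) (hr k) (hx k) (hy k)
    simp only [hE, hδ1def, hδ2def, ← hlam]
    linarith [this]
  have hμ2 : (0:ℝ) < 2/μ := by positivity
  clear_value lam ρ δ1 δ2 rs E
  have hEnn : ∀ k, 0 ≤ E k := by
    intro k
    have h1 := l2sq_nonneg (x k - xs)
    have h2 := l2sq_nonneg (y k - ys)
    have h3 : (0:ℝ) ≤ β/τ := by positivity
    have h4 : (0:ℝ) ≤ 1/(γ*β) := by positivity
    simp only [hE]
    have := mul_nonneg h3 h1
    have := mul_nonneg h4 h2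
    linarith
  have hterms_nonneg : ∀ k, 0 ≤ δ1 * l2sq (x k - x (k+1))
      + δ2 * l2sq (A.mulVec (x (k+1)) + r (k+1) - b) + (2/μ) * l2sq (r (k+1) - μ • ys) := by
    intro k
    have h1 := mul_nonneg hδ1.le (l2sq_nonneg (x k - x (k+1)))
    have h2 := mul_nonneg hδ2.le (l2sq_nonneg (A.mulVec (x (k+1)) + r (k+1) - b))
    have h3 := mul_nonneg hμ2.le (l2sq_nonneg (r (k+1) - μ • ys))
    linarith
  have hEanti : Antitone E := by
    apply antitone_nat_of_succ_le
    intro k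
    linarith [hkey k, hterms_nonneg k]
  have hEbdd : BddBelow (Set.range E) := ⟨0, fun v ⟨k, hk⟩ => hk ▸ hEnn k⟩
  have hEconv : Filter.Tendsto E Filter.atTop (nhds (⨅ k, E k)) :=
    tendsto_atTop_ciInf hEanti hEbdd
  have hEshift : Filter.Tendsto (fun k => E (k+1)) Filter.atTop (nhds (⨅ k, E k)) :=
    (Filter.tendsto_add_atTop_iff_nat 1).mpr hEconv
  have hdiff : Filter.Tendsto (fun k => E k - E (k+1)) Filter.atTop (nhds 0) := by
    have := hEconv.sub hEshift
    simpa using this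
  -- convergence of the three residual quantities
  have hsqueeze : ∀ (c : ℝ) (hc' : 0 < c) (f : ℕ → ℝ) (hf : ∀ k, 0 ≤ f k)
      (hb : ∀ k, c * f k ≤ E k - E (k+1)),
      Filter.Tendsto f Filter.atTop (nhds 0) := by
    intro c hc' f hf hb
    apply squeeze_zero hf (fun k => ?_) (by simpa using hdiff.div_const c)
    rw [le_div_iff₀ hc']
    calc f k * c = c * f k := by ring
    _ ≤ E k - E (k+1) := hb k
  have hT1 : Filter.Tendsto (fun k => l2sq (x k - x (k+1))) Filter.atTop (nhds 0) := by
    apply hsqueeze δ1 hδ1 _ (fun k => l2sq_nonneg _)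
    intro k
    have h1 := mul_nonneg hδ2.le (l2sq_nonneg (A.mulVec (x (k+1)) + r (k+1) - b))
    have h2 := mul_nonneg hμ2.le (l2sq_nonneg (r (k+1) - μ • ys))
    linarith [hkey k]
  have hT2 : Filter.Tendsto (fun k => l2sq (A.mulVec (x (k+1)) + r (k+1) - b))
      Filter.atTop (nhds 0) := by
    apply hsqueeze δ2 hδ2 _ (fun k => l2sq_nonneg _)
    intro k
    have h1 := mul_nonneg hδ1.le (l2sq_nonneg (x k - x (k+1)))
    have h2 := mul_nonneg hμ2.le (l2sq_nonneg (r (k+1) - μ • ys))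
    linarith [hkey k]
  have hT3 : Filter.Tendsto (fun k => l2sq (r (k+1) - μ • ys)) Filter.atTop (nhds 0) := by
    apply hsqueeze (2/μ) hμ2 _ (fun k => l2sq_nonneg _)
    intro k
    have h1 := mul_nonneg hδ1.le (l2sq_nonneg (x k - x (k+1)))
    have h2 := mul_nonneg hδ2.le (l2sq_nonneg (A.mulVec (x (k+1)) + r (k+1) - b))
    linarith [hkey k]
  have hV1 : Filter.Tendsto (fun k => x k - x (k+1)) Filter.atTop (nhds 0) :=
    tendsto_of_l2sq_tendsto_zero hT1
  have hV2 : Filter.Tendsto (fun k => A.mulVec (x (k+1)) + r (k+1) - b) Filter.atTop (nhds 0) :=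
    tendsto_of_l2sq_tendsto_zero hT2
  have hV3 : Filter.Tendsto (fun k => r (k+1) - rs) Filter.atTop (nhds 0) := by
    rw [hrs]; exact tendsto_of_l2sq_tendsto_zero hT3
  have hrconv1 : Filter.Tendsto (fun k => r (k+1)) Filter.atTop (nhds rs) := by
    have := hV3.add (tendsto_const_nhds (x := rs) (f := Filter.atTop))
    simpa using this
  -- boundedness and convergent subsequence
  set u : ℕ → (Fin n → ℂ) × (Fin m → ℂ) := fun k => (x k, y k) with hu
  have hEk0 : ∀ k, E k ≤ E 0 := fun k => hEanti (Nat.zero_le k)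
  set R : ℝ := Real.sqrt ((τ/β) * E 0) + ‖xs‖ + (Real.sqrt ((γ*β) * E 0) + ‖ys‖) with hR
  have humem : ∀ k, u k ∈ Metric.closedBall (0 : (Fin n → ℂ) × (Fin m → ℂ)) R := by
    intro k
    rw [Metric.mem_closedBall, dist_zero_right]
    have hx1 : ‖x k‖ ≤ Real.sqrt ((τ/β) * E 0) + ‖xs‖ := by
      have h1 : ‖x k - xs‖ ≤ Real.sqrt (l2sq (x k - xs)) := pinorm_le_sqrt_l2sq _
      have h2 : l2sq (x k - xs) ≤ (τ/β) * E 0 := by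
        have h3 : (β/τ) * l2sq (x k - xs) ≤ E k := by
          have h4 := l2sq_nonneg (y k - ys)
          have h5 : (0:ℝ) ≤ 1/(γ*β) := by positivity
          have h7 := mul_nonneg h5 h4
          simp only [hE]
          linarith
        have h6 : (β/τ) * l2sq (x k - xs) ≤ E 0 := le_trans h3 (hEk0 k)
        calc l2sq (x k - xs) = (τ/β) * ((β/τ) * l2sq (x k - xs)) := by field_simp
        _ ≤ (τ/β) * E 0 := mul_le_mul_of_nonneg_left h6 (by positivity)
      calc ‖x k‖ = ‖(x k - xs) + xs‖ := by rw [sub_add_cancel]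
      _ ≤ ‖x k - xs‖ + ‖xs‖ := norm_add_le _ _
      _ ≤ Real.sqrt (l2sq (x k - xs)) + ‖xs‖ := by linarith
      _ ≤ Real.sqrt ((τ/β) * E 0) + ‖xs‖ := by
          have := Real.sqrt_le_sqrt h2
          linarith
    have hy1 : ‖y k‖ ≤ Real.sqrt ((γ*β) * E 0) + ‖ys‖ := by
      have h1 : ‖y k - ys‖ ≤ Real.sqrt (l2sq (y k - ys)) := pinorm_le_sqrt_l2sq _
      have h2 : l2sq (y k - ys) ≤ (γ*β) * E 0 := by
        have h3 : (1/(γ*β)) * l2sq (y k - ys) ≤ E k := by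
          have h4 := l2sq_nonneg (x k - xs)
          have h5 : (0:ℝ) ≤ β/τ := by positivity
          have h7 := mul_nonneg h5 h4
          simp only [hE]
          linarith
        have h6 : (1/(γ*β)) * l2sq (y k - ys) ≤ E 0 := le_trans h3 (hEk0 k)
        calc l2sq (y k - ys) = (γ*β) * ((1/(γ*β)) * l2sq (y k - ys)) := by field_simp; try ring
        _ ≤ (γ*β) * E 0 := mul_le_mul_of_nonneg_left h6 (by positivity)
      calc ‖y k‖ = ‖(y k - ys) + ys‖ := by rw [sub_add_cancel]
      _ ≤ ‖y k - ys‖ + ‖ys‖ := norm_add_le _ _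
      _ ≤ Real.sqrt (l2sq (y k - ys)) + ‖ys‖ := by linarith
      _ ≤ Real.sqrt ((γ*β) * E 0) + ‖ys‖ := by
          have := Real.sqrt_le_sqrt h2
          linarith
    have hsq1 : (0:ℝ) ≤ Real.sqrt ((γ*β) * E 0) + ‖ys‖ := by positivity
    have hsq2 : (0:ℝ) ≤ Real.sqrt ((τ/β) * E 0) + ‖xs‖ := by positivity
    calc ‖u k‖ = max ‖x k‖ ‖y k‖ := rfl
    _ ≤ R := by
        rw [hR]
        apply max_le <;> linarith
  obtain ⟨p, hpK, φ, hφmono, hφtend⟩ :=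
    (isCompact_closedBall (0 : (Fin n → ℂ) × (Fin m → ℂ)) R).tendsto_subseq humem
  set xt : Fin n → ℂ := p.1 with hxt
  set yt : Fin m → ℂ := p.2 with hyt
  have hφatTop : Filter.Tendsto φ Filter.atTop Filter.atTop := hφmono.tendsto_atTop
  have hxφ : Filter.Tendsto (fun j => x (φ j)) Filter.atTop (nhds xt) :=
    (continuous_fst.tendsto p).comp hφtend
  have hyφ : Filter.Tendsto (fun j => y (φ j)) Filter.atTop (nhds yt) :=
    (continuous_snd.tendsto p).comp hφtend
  have heφ : Filter.Tendsto (fun j => x (φ j) - x (φ j + 1)) Filter.atTop (nhds 0) :=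
    hV1.comp hφatTop
  have hx1φ : Filter.Tendsto (fun j => x (φ j + 1)) Filter.atTop (nhds xt) := by
    have := hxφ.sub heφ
    simp only [sub_sub_cancel] at this
    simpa using this
  have hrφ : Filter.Tendsto (fun j => r (φ j + 1)) Filter.atTop (nhds rs) :=
    hrconv1.comp hφatTop
  have hsφ : Filter.Tendsto (fun j => A.mulVec (x (φ j + 1)) + r (φ j + 1) - b)
      Filter.atTop (nhds 0) := hV2.comp hφatTop
  -- Claim 1 : A xt + rs = b
  have hclaim1 : A.mulVec xt + rs = b := by
    have hlim2 : Filter.Tendsto (fun j => A.mulVec (x (φ j + 1)) + r (φ j + 1) - b)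
        Filter.atTop (nhds (A.mulVec xt + rs - b)) := by
      have h1 : Filter.Tendsto (fun j => A.mulVec (x (φ j + 1))) Filter.atTop
          (nhds (A.mulVec xt)) := ((continuous_mulVec A).tendsto xt).comp hx1φ
      have := (h1.add hrφ).sub (tendsto_const_nhds (x := b) (f := Filter.atTop))
      exact this
    have := tendsto_nhds_unique hlim2 hsφ
    have h2 : A.mulVec xt + rs - b = 0 := this
    funext i
    have := congrFun h2 i
    simp only [Pi.sub_apply, Pi.add_apply, Pi.zero_apply] at this
    have h3 : (A.mulVec xt) i + rs i = b i := by linear_combination this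
    simpa using h3
  -- Claim 2 : rs = μ • yt
  have hyid : ∀ k, μ • y k = r (k+1) + (μ*β) • (A.mulVec (x k) + r (k+1) - b) := by
    intro k
    have hμβ : (0:ℝ) < 1 + μ * β := by positivity
    funext i
    have hi := congrFun (hr k) i
    simp only [Pi.smul_apply, Pi.sub_apply, Pi.add_apply, Complex.real_smul] at hi ⊢
    push_cast at hi ⊢
    have hβc : ((β:ℝ):ℂ) ≠ 0 := Complex.ofReal_ne_zero.mpr (ne_of_gt hβ)
    have hμβc : (1 + (μ:ℂ) * (β:ℂ)) ≠ 0 := by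
      have := Complex.ofReal_ne_zero.mpr (ne_of_gt hμβ)
      push_cast at this
      convert this using 2 <;> norm_cast
    field_simp at hi
    apply mul_left_cancel₀ hβc
    linear_combination (-(β:ℂ)) * hi
  have hclaim2 : rs = μ • yt := by
    have hAxrb : Filter.Tendsto (fun j => A.mulVec (x (φ j)) + r (φ j + 1) - b)
        Filter.atTop (nhds 0) := by
      have h1 : Filter.Tendsto (fun j => A.mulVec (x (φ j) - x (φ j + 1)))
          Filter.atTop (nhds 0) := by
        have := ((continuous_mulVec A).tendsto 0).comp heφ
        simpa [Matrix.mulVec_zero, Function.comp_def] using this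
      have h2 := h1.add hsφ
      simp only [add_zero] at h2
      have h3 : (fun j => A.mulVec (x (φ j) - x (φ j + 1))
          + (A.mulVec (x (φ j + 1)) + r (φ j + 1) - b))
          = (fun j => A.mulVec (x (φ j)) + r (φ j + 1) - b) := by
        funext j
        rw [Matrix.mulVec_sub]
        funext i
        simp only [Pi.add_apply, Pi.sub_apply]
        ring
      rwa [h3] at h2
    have hlhs : Filter.Tendsto (fun j => μ • y (φ j)) Filter.atTop (nhds (μ • yt)) :=
      hyφ.const_smul μ
    have hrhs : Filter.Tendsto (fun j => r (φ j + 1)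
        + (μ*β) • (A.mulVec (x (φ j)) + r (φ j + 1) - b)) Filter.atTop (nhds rs) := by
      have h1 := hrφ.add ((hAxrb.const_smul (μ*β)))
      simpa using h1
    have heqseq : (fun j => μ • y (φ j)) = (fun j => r (φ j + 1)
        + (μ*β) • (A.mulVec (x (φ j)) + r (φ j + 1) - b)) := by
      funext j
      exact hyid (φ j)
    rw [heqseq] at hlhs
    exact (tendsto_nhds_unique hlhs hrhs).symm
  -- Claim 3 : subgradient at xt
  have hclaim3 : ∀ v, l1 xt + reInner (Aᴴ.mulVec yt) (v - xt) ≤ l1 v := by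
    intro v
    have hτβ : (0:ℝ) < τ/β := by positivity
    -- prox inequality at step φ j
    have hPk : ∀ k, (τ/β) * l1 (x (k+1))
        + reInner ((x k - τ • (Aᴴ.mulVec (A.mulVec (x k) + r (k+1) - b - (1/β) • y k))) - x (k+1))
            (v - x (k+1)) ≤ (τ/β) * l1 v := by
      intro k
      have h5 := shrink_prox (x k - τ • (Aᴴ.mulVec (A.mulVec (x k) + r (k+1) - b - (1/β) • y k)))
        (τ/β) hτβ.le v
      rw [← hx k] at h5
      exact h5
    -- limit of the argument of g
    have hargφ : Filter.Tendsto
        (fun j => A.mulVec (x (φ j)) + r (φ j + 1) - b - (1/β) • y (φ j))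
        Filter.atTop (nhds (-((1/β) • yt))) := by
      have hAxrb : Filter.Tendsto (fun j => A.mulVec (x (φ j)) + r (φ j + 1) - b)
          Filter.atTop (nhds 0) := by
        have h1 : Filter.Tendsto (fun j => A.mulVec (x (φ j) - x (φ j + 1)))
            Filter.atTop (nhds 0) := by
          have := ((continuous_mulVec A).tendsto 0).comp heφ
          simpa [Matrix.mulVec_zero, Function.comp_def] using this
        have h2 := h1.add hsφ
        simp only [add_zero] at h2
        have h3 : (fun j => A.mulVec (x (φ j) - x (φ j + 1))
            + (A.mulVec (x (φ j + 1)) + r (φ j + 1) - b))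
            = (fun j => A.mulVec (x (φ j)) + r (φ j + 1) - b) := by
          funext j
          rw [Matrix.mulVec_sub]
          funext i
          simp only [Pi.add_apply, Pi.sub_apply]
          ring
        rwa [h3] at h2
      have := hAxrb.sub (hyφ.const_smul (1/β))
      simpa using this
    have hwφ : Filter.Tendsto
        (fun j => (x (φ j) - τ • (Aᴴ.mulVec (A.mulVec (x (φ j)) + r (φ j + 1) - b
          - (1/β) • y (φ j)))) - x (φ j + 1))
        Filter.atTop (nhds ((τ/β) • Aᴴ.mulVec yt)) := by
      have hgφ : Filter.Tendsto
          (fun j => Aᴴ.mulVec (A.mulVec (x (φ j)) + r (φ j + 1) - b - (1/β) • y (φ j)))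
          Filter.atTop (nhds (Aᴴ.mulVec (-((1/β) • yt)))) :=
        ((continuous_mulVec Aᴴ).tendsto _).comp hargφ
      have h1 := heφ.sub (hgφ.const_smul τ)
      have h2 : (0 : Fin n → ℂ) - τ • (Aᴴ.mulVec (-((1/β) • yt))) = (τ/β) • Aᴴ.mulVec yt := by
        have hβc : ((β:ℝ):ℂ) ≠ 0 := Complex.ofReal_ne_zero.mpr (ne_of_gt hβ)
        funext i
        simp only [Pi.sub_apply, Pi.zero_apply, Pi.smul_apply, Complex.real_smul,
          Matrix.mulVec, dotProduct, Finset.mul_sum]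
        rw [zero_sub, ← Finset.sum_neg_distrib]
        apply Finset.sum_congr rfl
        intro j _
        simp only [Pi.neg_apply, Pi.smul_apply, Complex.real_smul]
        push_cast
        try field_simp
        try ring
      rw [h2] at h1
      have h3 : (fun j => (x (φ j) - τ • (Aᴴ.mulVec (A.mulVec (x (φ j)) + r (φ j + 1) - b
          - (1/β) • y (φ j)))) - x (φ j + 1))
          = (fun j => (x (φ j) - x (φ j + 1)) - τ • (Aᴴ.mulVec (A.mulVec (x (φ j))
            + r (φ j + 1) - b - (1/β) • y (φ j)))) := by
        funext j
        funext i
        simp only [Pi.sub_apply, Pi.smul_apply]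
        ring
      rw [h3]
      exact h1
    have hlim : Filter.Tendsto (fun j => (τ/β) * l1 (x (φ j + 1))
        + reInner ((x (φ j) - τ • (Aᴴ.mulVec (A.mulVec (x (φ j)) + r (φ j + 1) - b
          - (1/β) • y (φ j)))) - x (φ j + 1)) (v - x (φ j + 1)))
        Filter.atTop
        (nhds ((τ/β) * l1 xt + reInner ((τ/β) • Aᴴ.mulVec yt) (v - xt))) := by
      have hl1t : Filter.Tendsto (fun j => l1 (x (φ j + 1))) Filter.atTop (nhds (l1 xt)) :=
        (continuous_l1.tendsto xt).comp hx1φ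
      have hvx : Filter.Tendsto (fun j => v - x (φ j + 1)) Filter.atTop (nhds (v - xt)) :=
        tendsto_const_nhds.sub hx1φ
      exact (hl1t.const_mul (τ/β)).add (tendsto_reInner hwφ hvx)
    have hle := le_of_tendsto hlim (Filter.Eventually.of_forall (fun j => hPk (φ j)))
    rw [reInner_smul_left] at hle
    have hfin : (τ/β) * (l1 xt + reInner (Aᴴ.mulVec yt) (v - xt)) ≤ (τ/β) * l1 v := by
      ring_nf at hle ⊢
      linarith
    exact le_of_mul_le_mul_left hfin hτβ
  -- Fejer monotonicity with respect to the limit point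
  have hfeas2 : A.mulVec xt + μ • yt = b := by rw [← hclaim2]; exact hclaim1
  set E2 : ℕ → ℝ := fun k => (β/τ) * l2sq (x k - xt) + (1/(γ*β)) * l2sq (y k - yt) with hE2
  clear_value E2
  have hkey2 : ∀ k, E2 (k+1) ≤ E2 k := by
    intro k
    have hk := key_ineq A b μ β τ γ ρ hμ hβ hτ hγ hρ xt yt hfeas2 hclaim3
      (x k) (x (k+1)) (r (k+1)) (y k) (y (k+1)) (hr k) (hx k) (hy k)
    have h1 := mul_nonneg hδ1.le (l2sq_nonneg (x k - x (k+1)))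
    have h2 := mul_nonneg hδ2.le (l2sq_nonneg (A.mulVec (x (k+1)) + r (k+1) - b))
    have h3 := mul_nonneg hμ2.le (l2sq_nonneg (r (k+1) - μ • yt))
    simp only [hE2]
    simp only [← hlam] at hk
    simp only [hδ1def, hδ2def] at h1 h2
    linarith [hk]
  have hE2nn : ∀ k, 0 ≤ E2 k := by
    intro k
    have h1 := l2sq_nonneg (x k - xt)
    have h2 := l2sq_nonneg (y k - yt)
    have h3 : (0:ℝ) ≤ β/τ := by positivity
    have h4 : (0:ℝ) ≤ 1/(γ*β) := by positivity
    simp only [hE2]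
    have := mul_nonneg h3 h1
    have := mul_nonneg h4 h2
    linarith
  have hE2anti : Antitone E2 := antitone_nat_of_succ_le hkey2
  have hE2conv : Filter.Tendsto E2 Filter.atTop (nhds (⨅ k, E2 k)) :=
    tendsto_atTop_ciInf hE2anti ⟨0, fun w ⟨k, hk⟩ => hk ▸ hE2nn k⟩
  have hl2sq0 : ∀ {ι : Type} [Fintype ι], l2sq (0 : ι → ℂ) = 0 := by
    intro ι _
    simp [l2sq]
  have hE2φ : Filter.Tendsto (fun j => E2 (φ j)) Filter.atTop (nhds 0) := by
    have hx0 : Filter.Tendsto (fun j => x (φ j) - xt) Filter.atTop (nhds 0) := by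
      have := hxφ.sub (tendsto_const_nhds (x := xt) (f := Filter.atTop))
      simpa using this
    have hy0 : Filter.Tendsto (fun j => y (φ j) - yt) Filter.atTop (nhds 0) := by
      have := hyφ.sub (tendsto_const_nhds (x := yt) (f := Filter.atTop))
      simpa using this
    have h1 : Filter.Tendsto (fun j => l2sq (x (φ j) - xt)) Filter.atTop (nhds 0) := by
      have := (continuous_l2sq.tendsto 0).comp hx0
      rwa [hl2sq0] at this
    have h2 : Filter.Tendsto (fun j => l2sq (y (φ j) - yt)) Filter.atTop (nhds 0) := by
      have := (continuous_l2sq.tendsto 0).comp hy0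
      rwa [hl2sq0] at this
    simp only [hE2]
    have h4 := (h1.const_mul (β/τ)).add (h2.const_mul (1/(γ*β)))
    simp only [mul_zero, add_zero] at h4
    exact h4
  have hE2inf : (⨅ k, E2 k) = 0 := by
    have h1 : Filter.Tendsto (fun j => E2 (φ j)) Filter.atTop (nhds (⨅ k, E2 k)) :=
      hE2conv.comp hφatTop
    exact tendsto_nhds_unique h1 hE2φ
  have hE2zero : Filter.Tendsto E2 Filter.atTop (nhds 0) := hE2inf ▸ hE2conv
  -- convergence of x and y
  have hxconv : Filter.Tendsto x Filter.atTop (nhds xt) := by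
    have h1 : Filter.Tendsto (fun k => l2sq (x k - xt)) Filter.atTop (nhds 0) := by
      apply squeeze_zero (fun k => l2sq_nonneg _) (fun k => ?_)
        (by simpa using hE2zero.const_mul (τ/β))
      have h2 : (0:ℝ) ≤ 1/(γ*β) := by positivity
      have h3 := mul_nonneg h2 (l2sq_nonneg (y k - yt))
      have h4 : (β/τ) * l2sq (x k - xt) ≤ E2 k := by
        simp only [hE2]; linarith
      calc l2sq (x k - xt) = (τ/β) * ((β/τ) * l2sq (x k - xt)) := by field_simp
      _ ≤ (τ/β) * E2 k := mul_le_mul_of_nonneg_left h4 (by positivity)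
    have h5 := tendsto_of_l2sq_tendsto_zero h1
    have := h5.add (tendsto_const_nhds (x := xt) (f := Filter.atTop))
    simpa using this
  have hyconv : Filter.Tendsto y Filter.atTop (nhds yt) := by
    have h1 : Filter.Tendsto (fun k => l2sq (y k - yt)) Filter.atTop (nhds 0) := by
      apply squeeze_zero (fun k => l2sq_nonneg _) (fun k => ?_)
        (by simpa using hE2zero.const_mul (γ*β))
      have h2 : (0:ℝ) ≤ β/τ := by positivity
      have h3 := mul_nonneg h2 (l2sq_nonneg (x k - xt))
      have h4 : (1/(γ*β)) * l2sq (y k - yt) ≤ E2 k := by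
        simp only [hE2]; linarith
      calc l2sq (y k - yt) = (γ*β) * ((1/(γ*β)) * l2sq (y k - yt)) := by field_simp; try ring
      _ ≤ (γ*β) * E2 k := mul_le_mul_of_nonneg_left h4 (by positivity)
    have h5 := tendsto_of_l2sq_tendsto_zero h1
    have := h5.add (tendsto_const_nhds (x := yt) (f := Filter.atTop))
    simpa using this
  have hrconv : Filter.Tendsto r Filter.atTop (nhds rs) :=
    (Filter.tendsto_add_atTop_iff_nat 1).mp hrconv1
  -- final optimality
  refine ⟨rs, xt, yt, hrconv, hxconv, hyconv, hclaim1, ?_⟩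
  intro x' r' hfeas'
  have hsub' := hclaim3 x'
  have hAd : A.mulVec (x' - xt) = rs - r' := by
    rw [Matrix.mulVec_sub]
    funext i
    have h1 := congrFun hfeas' i
    have h2 := congrFun hclaim1 i
    simp only [Pi.add_apply] at h1 h2
    simp only [Pi.sub_apply]
    linear_combination h1 - h2
  have hinner : reInner (Aᴴ.mulVec yt) (x' - xt) = reInner yt (rs - r') := by
    rw [reInner_mulVec, Matrix.conjTranspose_conjTranspose, hAd]
  have hrsym : reInner yt (rs - r') = - reInner yt (r' - rs) := by
    rw [← reInner_neg_right]
    congr 1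
    funext i; simp only [Pi.neg_apply, Pi.sub_apply]; ring
  have hr'dec : r' = rs + (r' - rs) := by
    funext i; simp only [Pi.add_apply, Pi.sub_apply]; ring
  have h2v : l2sq r' = l2sq rs + 2*(μ * reInner yt (r' - rs)) + l2sq (r' - rs) := by
    conv_lhs => rw [hr'dec]
    rw [l2sq_add]
    have : reInner rs (r' - rs) = μ * reInner yt (r' - rs) := by
      rw [hclaim2, reInner_smul_left]
    rw [this]
  have hexp : (1/(2*μ)) * l2sq r' = (1/(2*μ)) * l2sq rs + reInner yt (r' - rs)
      + (1/(2*μ)) * l2sq (r' - rs) := by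
    rw [h2v]
    field_simp
  have hnn : 0 ≤ (1/(2*μ)) * l2sq (r' - rs) :=
    mul_nonneg (by positivity) (l2sq_nonneg _)
  rw [hinner, hrsym] at hsub'
  linarith [hsub', hexp, hnn]
end Assembly

/-- Theorem 2.1 (convergence of the primal ADM for QP_mu). -/
theorem padm_qp_convergence {m n : ℕ} (A : Matrix (Fin m) (Fin n) ℂ) (b : Fin m → ℂ)
    (μ β τ γ : ℝ) (hμ : 0 < μ) (hβ : 0 < β) (hτ : 0 < τ) (hγ : 0 < γ)
    (hτγ : τ * lmax A + γ < 2)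
    (x : ℕ → Fin n → ℂ) (r : ℕ → Fin m → ℂ) (y : ℕ → Fin m → ℂ)
    (hr : ∀ k, r (k+1) = (μ * β / (1 + μ * β)) • ((1/β) • y k - (A.mulVec (x k) - b)))
    (hx : ∀ k, x (k+1) =
      shrink (x k - τ • (Aᴴ.mulVec (A.mulVec (x k) + r (k+1) - b - (1/β) • y k))) (τ/β))
    (hy : ∀ k, y (k+1) = y k - (γ * β) • (A.mulVec (x (k+1)) + r (k+1) - b)) :
    ∃ (rt : Fin m → ℂ) (xt : Fin n → ℂ) (yt : Fin m → ℂ),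
      Tendsto r atTop (𝓝 rt) ∧ Tendsto x atTop (𝓝 xt) ∧ Tendsto y atTop (𝓝 yt) ∧
      A.mulVec xt + rt = b ∧
      ∀ (x' : Fin n → ℂ) (r' : Fin m → ℂ), A.mulVec x' + r' = b →
        l1 xt + (1/(2*μ)) * l2sq rt ≤ l1 x' + (1/(2*μ)) * l2sq r' := by
  exact padm_qp_convergence' A b μ β τ γ hμ hβ hτ hγ hτγ x r y hr hx hy
end

section
/- Let z ∈ ℂ^n and ν > 0. Then the function x ↦ ‖x‖₁ + (1/(2ν))‖x − z‖₂² over x ∈ ℂ^n has the unique minimizer x = Shrink(z, ν), i.e., the vector with components max(|zᵢ| − ν, 0)·sign(zᵢ). -/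
open Filter Topology Matrix Finset

lemma scalar_key (ν : ℝ) (hν : 0 < ν) (z w : ℂ)
    (hw : w ≠ (↑(max (‖z‖ - ν) 0) * csign z)) :
    ‖(↑(max (‖z‖ - ν) 0) * csign z)‖ +
      (1/(2*ν)) * (‖((↑(max (‖z‖ - ν) 0) * csign z) - z)‖)^2 <
    ‖w‖ + (1/(2*ν)) * (‖(w - z)‖)^2 := by
  set a := ‖z‖ with ha
  set t := max (a - ν) 0 with htdef
  set r := ‖w‖ with hr
  have ha0 : 0 ≤ a := norm_nonneg z
  have hr0 : 0 ≤ r := norm_nonneg w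
  have ht0 : 0 ≤ t := le_max_right _ _
  have hta : t ≤ a := max_le (by linarith) ha0
  have hc : 0 < 1/(2*ν) := by positivity
  have hs_abs : ‖((t:ℂ) * csign z)‖ = t := by
    by_cases hz : z = 0
    · have : t = 0 := by
        rw [htdef, ha, hz]; simp; linarith
      simp [this]
    · have haz : (a:ℂ) ≠ 0 := by
        simpa [ha] using hz
      simp [csign, hz, norm_mul, norm_div, Complex.norm_real, abs_of_nonneg ht0,
        abs_of_nonneg ha0]
  have hsz : ‖((t:ℂ) * csign z - z)‖ = a - t := by
    by_cases hz : z = 0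
    · have ht' : t = 0 := by rw [htdef, ha, hz]; simp; linarith
      simp [hz, ht', ha]
    · have haz : (a:ℂ) ≠ 0 := by
        simpa [ha] using hz
      have hrw : (t:ℂ) * csign z - z = (((t - a)/a : ℝ) : ℂ) * z := by
        simp only [csign, if_neg hz]
        push_cast
        field_simp
        rw [← ha]; field_simp
      rw [hrw, norm_mul, Complex.norm_real, Real.norm_eq_abs, ← ha, abs_div, abs_of_nonneg ha0,
        abs_of_nonpos (by linarith : t - a ≤ 0)]
      have hane : a ≠ 0 := by rwa [ha, norm_ne_zero_iff]
      field_simp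
      ring
  rw [hs_abs, hsz]
  have hexp : ‖(w - z)‖ ^ 2 = r^2 - 2 * (w * (starRingEnd ℂ) z).re + a^2 := by
    rw [Complex.sq_norm, Complex.normSq_sub, ← Complex.sq_norm, ← Complex.sq_norm, ← ha, ← hr]
    ring
  rw [hexp]
  set R := (w * (starRingEnd ℂ) z).re with hR
  have hRle : R ≤ r * a := by
    calc R ≤ ‖(w * (starRingEnd ℂ) z)‖ := Complex.re_le_norm _
    _ = r * a := by rw [norm_mul, Complex.norm_conj, ← ha, ← hr]
  by_cases hrt : r = t
  · have htpos : 0 < t := by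
      rcases lt_or_eq_of_le ht0 with h | h
      · exact h
      · exfalso
        apply hw
        have hw0 : w = 0 := by
          have : ‖w‖ = 0 := by rw [← hr, hrt, ← h]
          exact norm_eq_zero.mp this
        rw [hw0, ← h]; push_cast; ring
    have hz : z ≠ 0 := by
      intro h; rw [h] at ha; simp at ha; rw [ha] at hta; linarith
    have haz : (a:ℂ) ≠ 0 := by simpa [ha] using hz
    have hRlt : R < r * a := by
      rcases lt_or_eq_of_le hRle with h | h
      · exact h
      · exfalso
        apply hw
        have habs : ‖(w * (starRingEnd ℂ) z)‖ = r * a := by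
          rw [norm_mul, Complex.norm_conj, ← ha, ← hr]
        have him : (w * (starRingEnd ℂ) z).im = 0 := by
          have h2 := Complex.sq_norm (w * (starRingEnd ℂ) z)
          rw [habs, Complex.normSq_apply, ← hR] at h2
          nlinarith [h]
        have hu : w * (starRingEnd ℂ) z = ((r*a : ℝ) : ℂ) := by
          apply Complex.ext
          · show (w * (starRingEnd ℂ) z).re = _
            rw [← hR, h]; simp
          · simp [him]
        have hs : ((t:ℂ) * csign z) * (starRingEnd ℂ) z = ((r*a : ℝ) : ℂ) := by
          simp only [csign, if_neg hz]
          rw [mul_assoc, div_mul_eq_mul_div, Complex.mul_conj]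
          have hnsq : (Complex.normSq z : ℂ) = ((a^2 : ℝ) : ℂ) := by
            rw [← Complex.sq_norm, ← ha]
          rw [hnsq, hrt]
          push_cast
          field_simp
          rw [← ha]; field_simp
        have hzc : (starRingEnd ℂ) z ≠ 0 := by simpa using hz
        exact mul_right_cancel₀ hzc (hu.trans hs.symm)
    rw [hrt] at hRlt ⊢
    have key : t + 1/(2*ν)*(t^2-2*R+a^2) - (t + 1/(2*ν)*(a-t)^2)
        = 2*((1/(2*ν))*(t*a-R)) := by ring
    linarith [mul_pos hc (show (0:ℝ) < t*a - R by linarith), key]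
  · have hfac : 0 ≤ (r - t) * (ν + t - a) := by
      rcases le_or_gt a ν with h | h
      · have ht' : t = 0 := max_eq_right (by linarith)
        rw [ht']; nlinarith
      · have ht' : t = a - ν := max_eq_left (by linarith)
        rw [ht']; nlinarith
    have hsq : 0 < (r - t)^2 := by
      have : r - t ≠ 0 := sub_ne_zero.mpr hrt
      positivity
    have key : r + 1/(2*ν)*(r^2-2*R+a^2) - (t + 1/(2*ν)*(a-t)^2)
        = 1/(2*ν)*((r-t)^2) + 2*((1/(2*ν))*((r-t)*(ν+t-a))) + 2*((1/(2*ν))*(r*a-R)) := by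
      field_simp
      ring
    linarith [mul_pos hc hsq, mul_nonneg hc.le hfac,
      mul_nonneg hc.le (show (0:ℝ) ≤ r*a - R by linarith), key]

/-- One-dimensional (componentwise) shrinkage: Shrink(z,ν) is the unique minimizer of
x ↦ ‖x‖₁ + (1/(2ν))‖x − z‖₂². -/
theorem shrinkage_unique_minimizer {n : ℕ} (z : Fin n → ℂ) (ν : ℝ) (hν : 0 < ν) :
    let F : (Fin n → ℂ) → ℝ := fun x => l1 x + (1/(2*ν)) * l2sq (x - z)
    ∀ x : Fin n → ℂ, x ≠ shrink z ν → F (shrink z ν) < F x := by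
  intro F x hx
  have hsum : ∀ y : Fin n → ℂ,
      F y = ∑ i, (‖(y i)‖ + (1/(2*ν)) * (‖(y i - z i)‖)^2) := by
    intro y
    simp only [F, l1, l2sq, Finset.mul_sum, Pi.sub_apply]
    rw [← Finset.sum_add_distrib]
  rw [hsum, hsum]
  obtain ⟨i0, hi0⟩ : ∃ i, x i ≠ shrink z ν i := by
    by_contra h; push_neg at h; exact hx (funext h)
  apply Finset.sum_lt_sum
  · intro i _
    by_cases h : x i = shrink z ν i
    · rw [h]
    · exact (scalar_key ν hν (z i) (x i) h).le
  · exact ⟨i0, Finset.mem_univ i0, scalar_key ν hν (z i0) (x i0) hi0⟩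
end

section
/- Let A ∈ ℂ^{m×n}, b ∈ ℂ^m, δ > 0, and assume the Slater condition: there exists x₀ ∈ ℂ^n with ‖A x₀ − b‖₂ < δ. Then strong duality holds between the constrained basis pursuit denoising problem and its dual: the minimum over x ∈ ℂ^n with ‖A x − b‖₂ ≤ δ of ‖x‖₁ equals the supremum over y ∈ ℂ^m with ‖A*y‖_∞ ≤ 1 of Re(b*y) − δ‖y‖₂, and the minimum is attained. -/
open Filter Topology Matrix Finset

namespace BPaux

variable {ι : Type*} [Fintype ι]

/-- identification with EuclideanSpace -/
noncomputable def toE (v : ι → ℂ) : EuclideanSpace ℂ ι := (WithLp.equiv 2 (ι → ℂ)).symm v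

lemma toE_apply (v : ι → ℂ) (i : ι) : toE v i = v i := rfl

lemma toE_add (u v : ι → ℂ) : toE (u + v) = toE u + toE v := rfl

lemma toE_smul (a : ℝ) (v : ι → ℂ) : toE (a • v) = a • toE v := rfl

lemma l2_eq_norm (v : ι → ℂ) : l2 v = ‖toE v‖ := by
  rw [EuclideanSpace.norm_eq]
  simp [l2, l2sq, toE_apply]

lemma reInner_eq_inner (y v : ι → ℂ) :
    reInner y v = (inner ℂ (toE y) (toE v)).re := by
  simp [reInner, PiLp.inner_apply, toE_apply, RCLike.inner_apply]
  exact Finset.sum_congr rfl fun i _ => by ring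

lemma l2_nonneg (v : ι → ℂ) : 0 ≤ l2 v := Real.sqrt_nonneg _

lemma l1_nonneg (v : ι → ℂ) : 0 ≤ l1 v :=
  Finset.sum_nonneg fun i _ => norm_nonneg _

lemma l2_smul (a : ℝ) (v : ι → ℂ) : l2 (a • v) = |a| * l2 v := by
  rw [l2_eq_norm, l2_eq_norm, toE_smul, norm_smul, Real.norm_eq_abs]

lemma l2_triangle (u v : ι → ℂ) : l2 (u + v) ≤ l2 u + l2 v := by
  rw [l2_eq_norm, l2_eq_norm, l2_eq_norm, toE_add]; exact norm_add_le _ _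

lemma l2_neg (v : ι → ℂ) : l2 (-v) = l2 v := by
  simp [l2, l2sq]

lemma l2_eq_zero {v : ι → ℂ} (h : l2 v = 0) : v = 0 := by
  rw [l2_eq_norm, norm_eq_zero] at h
  funext i
  have := congrFun (congrArg (WithLp.equiv 2 (ι → ℂ)) h) i
  exact this

lemma reInner_le (y v : ι → ℂ) : reInner y v ≤ l2 y * l2 v := by
  rw [reInner_eq_inner, l2_eq_norm, l2_eq_norm]
  exact re_inner_le_norm (𝕜 := ℂ) (toE y) (toE v)

lemma reInner_comm (y v : ι → ℂ) : reInner y v = reInner v y := by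
  unfold reInner
  rw [Complex.re_sum, Complex.re_sum]
  apply Finset.sum_congr rfl
  intro i _
  simp [Complex.mul_re]
  ring

lemma reInner_add_right (y u v : ι → ℂ) :
    reInner y (u + v) = reInner y u + reInner y v := by
  simp [reInner, mul_add, Finset.sum_add_distrib]

lemma reInner_sub_right (y u v : ι → ℂ) :
    reInner y (u - v) = reInner y u - reInner y v := by
  simp [reInner, mul_sub, Finset.sum_sub_distrib]

lemma reInner_smul_left (a : ℝ) (y v : ι → ℂ) :
    reInner (a • y) v = a * reInner y v := by
  unfold reInner
  rw [Complex.re_sum, Complex.re_sum, Finset.mul_sum]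
  apply Finset.sum_congr rfl
  intro i _
  simp only [Pi.smul_apply, Complex.real_smul, _root_.map_mul, Complex.conj_ofReal, mul_assoc]
  simp [Complex.re_ofReal_mul]

lemma reInner_neg_left (y v : ι → ℂ) : reInner (-y) v = - reInner y v := by
  simp [reInner]

lemma reInner_zero_right (y : ι → ℂ) : reInner y 0 = 0 := by simp [reInner]

lemma reInner_self (y : ι → ℂ) : reInner y y = l2 y * l2 y := by
  rw [reInner_eq_inner, l2_eq_norm]
  have := @inner_self_eq_norm_mul_norm ℂ _ _ _ _ (toE y)
  simpa using this

lemma abs_le_linf (v : ι → ℂ) (i : ι) : ‖v i‖ ≤ linf v := by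
  unfold linf
  exact le_ciSup (f := fun i => ‖v i‖) (Set.Finite.bddAbove (Set.finite_range _)) i

lemma linf_le_one {v : ι → ℂ} (h : ∀ i, ‖v i‖ ≤ 1) : linf v ≤ 1 := by
  unfold linf
  rcases isEmpty_or_nonempty ι with hι | hι
  · rw [Real.iSup_of_isEmpty]; norm_num
  · exact ciSup_le h

lemma reInner_le_l1_linf (x v : ι → ℂ) : reInner x v ≤ l1 x * linf v := by
  have h1 : reInner x v ≤ ∑ i, ‖x i‖ * ‖v i‖ := by
    unfold reInner
    rw [Complex.re_sum]
    apply Finset.sum_le_sum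
    intro i _
    calc ((starRingEnd ℂ) (x i) * v i).re ≤ ‖(starRingEnd ℂ) (x i) * v i‖ :=
        Complex.re_le_norm _
      _ = ‖x i‖ * ‖v i‖ := by simp [_root_.map_mul]
  refine h1.trans ?_
  rw [l1, Finset.sum_mul]
  apply Finset.sum_le_sum
  intro i _
  exact mul_le_mul_of_nonneg_left (abs_le_linf v i) (norm_nonneg _)

lemma reInner_mulVec {m n : ℕ} (A : Matrix (Fin m) (Fin n) ℂ) (x : Fin n → ℂ) (y : Fin m → ℂ) :
    reInner (A.mulVec x) y = reInner x (Aᴴ.mulVec y) := by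
  unfold reInner
  congr 1
  simp only [Matrix.mulVec, dotProduct, Matrix.conjTranspose_apply, map_sum,
    _root_.map_mul, Finset.sum_mul, Finset.mul_sum]
  rw [Finset.sum_comm]
  apply Finset.sum_congr rfl; intro i _
  apply Finset.sum_congr rfl; intro j _
  simp only [starRingEnd_apply]
  ring

end BPaux

namespace BPaux

variable {ι : Type*} [Fintype ι]

lemma l1_single [DecidableEq ι] (j : ι) (a : ℂ) : l1 (Pi.single j a) = ‖a‖ := by
  unfold l1
  rw [Finset.sum_eq_single j]
  · simp
  · intro i _ hij; simp [Pi.single_apply, hij]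
  · simp

lemma reInner_single_left [DecidableEq ι] (j : ι) (a : ℂ) (v : ι → ℂ) :
    reInner (Pi.single j a) v = ((starRingEnd ℂ) a * v j).re := by
  unfold reInner
  congr 1
  rw [Finset.sum_eq_single j]
  · simp
  · intro i _ hij; simp [Pi.single_apply, hij]
  · simp

lemma l1_convex (x₁ x₂ : ι → ℂ) (a c : ℝ) (ha : 0 ≤ a) (hc : 0 ≤ c) :
    l1 (a • x₁ + c • x₂) ≤ a * l1 x₁ + c * l1 x₂ := by
  unfold l1
  rw [Finset.mul_sum, Finset.mul_sum, ← Finset.sum_add_distrib]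
  apply Finset.sum_le_sum
  intro i _
  calc ‖(a • x₁ + c • x₂) i‖
      ≤ ‖(a • x₁) i‖ + ‖(c • x₂) i‖ := by
        exact norm_add_le _ _
    _ = a * ‖x₁ i‖ + c * ‖x₂ i‖ := by
        simp [Pi.smul_apply, Complex.real_smul, _root_.map_mul, Complex.norm_real,
          abs_of_nonneg ha, abs_of_nonneg hc]

lemma continuous_l1 : Continuous (l1 (ι := ι)) := by
  unfold l1
  exact continuous_finset_sum _ fun i _ => continuous_norm.comp (continuous_apply i)

lemma continuous_l2 : Continuous (l2 (ι := ι)) := by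
  unfold l2 l2sq
  exact Real.continuous_sqrt.comp (continuous_finset_sum _ fun i _ =>
    ((continuous_norm.comp (continuous_apply i)).pow 2))

/-- Representation of a real-linear functional on ℂ^ι as reInner. -/
lemma repr_reInner [DecidableEq ι] (g : (ι → ℂ) →L[ℝ] ℝ) :
    ∃ y : ι → ℂ, ∀ z : ι → ℂ, g z = reInner y z := by
  refine ⟨fun j => (g (Pi.single j 1) : ℂ) + Complex.I * (g (Pi.single j Complex.I)), fun z => ?_⟩
  have hz : z = ∑ j, Pi.single j (z j) := by
    rw [Finset.univ_sum_single]
  conv_lhs => rw [hz]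
  rw [map_sum]
  unfold reInner
  rw [Complex.re_sum]
  apply Finset.sum_congr rfl
  intro j _
  have hdec : Pi.single j (z j) =
      (z j).re • (Pi.single j (1 : ℂ) : ι → ℂ) + (z j).im • (Pi.single j Complex.I : ι → ℂ) := by
    funext k
    by_cases h : k = j
    · subst h
      simp [Pi.single_apply, Complex.real_smul]
    · simp [Pi.single_apply, h]
  rw [hdec, map_add, _root_.map_smul, _root_.map_smul]
  simp only [smul_eq_mul]
  set g1 := g (Pi.single j (1 : ℂ))
  set g2 := g (Pi.single j Complex.I)
  simp [_root_.map_add, _root_.map_mul, Complex.conj_ofReal, Complex.add_re, Complex.mul_re,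
    Complex.conj_re, Complex.conj_im, Complex.I_re, Complex.I_im, Complex.ofReal_re,
    Complex.ofReal_im]
  ring

end BPaux

namespace BPaux

variable {ι : Type*} [Fintype ι]

lemma l2_zero : l2 (0 : ι → ℂ) = 0 := by simp [l2, l2sq]

lemma l1_zero : l1 (0 : ι → ℂ) = 0 := by simp [l1]

lemma reInner_zero_left (v : ι → ℂ) : reInner 0 v = 0 := by simp [reInner]

lemma abs_le_l1 (x : ι → ℂ) (i : ι) : ‖x i‖ ≤ l1 x :=
  Finset.single_le_sum (fun j _ => norm_nonneg (x j)) (Finset.mem_univ i)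

lemma mulVec_real_smul {m n : ℕ} (A : Matrix (Fin m) (Fin n) ℂ) (a : ℝ) (x : Fin n → ℂ) :
    A.mulVec (a • x) = a • A.mulVec x := by
  funext i
  simp only [Matrix.mulVec, dotProduct, Pi.smul_apply, Complex.real_smul,
    Finset.mul_sum]
  apply Finset.sum_congr rfl
  intro j _
  ring

lemma convex_lt {u v d a c : ℝ} (hu : u < d) (hv : v < d) (ha : 0 ≤ a) (hc : 0 ≤ c)
    (hac : a + c = 1) : a * u + c * v < d := by
  rcases eq_or_lt_of_le ha with h | h
  · have : c = 1 := by linarith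
    simp [← h, this, hv]
  · have h1 : a * u < a * d := mul_lt_mul_of_pos_left hu h
    have h2 : c * v ≤ c * d := mul_le_mul_of_nonneg_left hv.le hc
    have h3 : a * d + c * d = d := by rw [← add_mul, hac, one_mul]
    linarith

lemma exists_min {m n : ℕ} (A : Matrix (Fin m) (Fin n) ℂ) (b : Fin m → ℂ) (δ : ℝ)
    (x0 : Fin n → ℂ) (hx0 : l2 (A.mulVec x0 - b) ≤ δ) :
    ∃ xt : Fin n → ℂ, l2 (A.mulVec xt - b) ≤ δ ∧
      ∀ x : Fin n → ℂ, l2 (A.mulVec x - b) ≤ δ → l1 xt ≤ l1 x := by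
  have hcont : Continuous fun x : Fin n → ℂ => A.mulVec x - b := by
    have h1 : Continuous fun x : Fin n → ℂ => A.mulVec x := by
      have := (Matrix.mulVecLin A).continuous_of_finiteDimensional
      exact this
    exact h1.sub continuous_const
  set K : Set (Fin n → ℂ) :=
    {x | l2 (A.mulVec x - b) ≤ δ} ∩ {x | l1 x ≤ l1 x0} with hK
  have hKclosed : IsClosed K := by
    apply IsClosed.inter
    · exact isClosed_le (continuous_l2.comp hcont) continuous_const
    · exact isClosed_le continuous_l1 continuous_const
  have hKbdd : Bornology.IsBounded K := by
    apply (Metric.isBounded_closedBall (x := (0 : Fin n → ℂ)) (r := l1 x0)).subset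
    rintro x ⟨-, hx2⟩
    rw [Metric.mem_closedBall, dist_zero_right]
    rw [pi_norm_le_iff_of_nonneg (l1_nonneg x0)]
    intro i
    calc ‖x i‖ = ‖x i‖ := rfl
      _ ≤ l1 x := abs_le_l1 x i
      _ ≤ l1 x0 := hx2
  have hKcompact : IsCompact K := Metric.isCompact_of_isClosed_isBounded hKclosed hKbdd
  have hKne : K.Nonempty := ⟨x0, hx0, (le_rfl : l1 x0 ≤ l1 x0)⟩
  obtain ⟨xt, hxtK, hxtmin⟩ := hKcompact.exists_isMinOn hKne continuous_l1.continuousOn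
  refine ⟨xt, hxtK.1, fun x hx => ?_⟩
  by_cases hx1 : l1 x ≤ l1 x0
  · exact hxtmin ⟨hx, hx1⟩
  · calc l1 xt ≤ l1 x0 := hxtmin ⟨hx0, (le_rfl : l1 x0 ≤ l1 x0)⟩
      _ ≤ l1 x := le_of_not_ge hx1

lemma weak_duality {m n : ℕ} (A : Matrix (Fin m) (Fin n) ℂ) (b : Fin m → ℂ) (δ : ℝ)
    (x : Fin n → ℂ) (y : Fin m → ℂ) (hx : l2 (A.mulVec x - b) ≤ δ)
    (hy : linf (Aᴴ.mulVec y) ≤ 1) :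
    reInner b y - δ * l2 y ≤ l1 x := by
  have hsplit : reInner b y =
      reInner y (b - A.mulVec x) + reInner (A.mulVec x) y := by
    rw [reInner_comm b y, reInner_comm (A.mulVec x) y, ← reInner_add_right]
    congr 1
    abel
  have h1 : reInner y (b - A.mulVec x) ≤ δ * l2 y := by
    calc reInner y (b - A.mulVec x) ≤ l2 y * l2 (b - A.mulVec x) := reInner_le _ _
      _ = l2 y * l2 (A.mulVec x - b) := by
          rw [show b - A.mulVec x = -(A.mulVec x - b) by abel, l2_neg]
      _ ≤ l2 y * δ := mul_le_mul_of_nonneg_left hx (l2_nonneg y)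
      _ = δ * l2 y := mul_comm _ _
  have h2 : reInner (A.mulVec x) y ≤ l1 x := by
    calc reInner (A.mulVec x) y = reInner x (Aᴴ.mulVec y) := reInner_mulVec A x y
      _ ≤ l1 x * linf (Aᴴ.mulVec y) := reInner_le_l1_linf _ _
      _ ≤ l1 x * 1 := mul_le_mul_of_nonneg_left hy (l1_nonneg x)
      _ = l1 x := mul_one _
  linarith

end BPaux

/-- Strong duality between BP_delta and its dual (2.24) under the Slater condition;
the primal minimum is attained and equals the dual supremum. -/
theorem strong_duality_bpdelta {m n : ℕ} (A : Matrix (Fin m) (Fin n) ℂ) (b : Fin m → ℂ)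
    (δ : ℝ) (hδ : 0 < δ) (hslater : ∃ x0 : Fin n → ℂ, l2 (A.mulVec x0 - b) < δ) :
    ∃ xt : Fin n → ℂ,
      l2 (A.mulVec xt - b) ≤ δ ∧
      (∀ x : Fin n → ℂ, l2 (A.mulVec x - b) ≤ δ → l1 xt ≤ l1 x) ∧
      IsLUB {v : ℝ | ∃ y : Fin m → ℂ, linf (Aᴴ.mulVec y) ≤ 1 ∧
        v = reInner b y - δ * l2 y} (l1 xt) := by
  classical
  obtain ⟨x0, hx0⟩ := hslater
  obtain ⟨xt, hxtS, hxtmin⟩ := BPaux.exists_min A b δ x0 hx0.le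
  refine ⟨xt, hxtS, hxtmin, ?_⟩
  set P := l1 xt with hP
  -- Key step (strong duality): there is a dual point with value at least P.
  have key : ∃ Y : Fin m → ℂ, linf (Aᴴ.mulVec Y) ≤ 1 ∧ P ≤ reInner b Y - δ * l2 Y := by
    set O : Set ((Fin m → ℂ) × ℝ) := {p | l2 p.1 < δ ∧ p.2 < P} with hOdef
    set C : Set ((Fin m → ℂ) × ℝ) := {p | ∃ x, p.1 = A.mulVec x - b ∧ l1 x ≤ p.2} with hCdef
    have hOopen : IsOpen O :=
      (isOpen_lt (BPaux.continuous_l2.comp continuous_fst) continuous_const).and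
        (isOpen_lt continuous_snd continuous_const)
    have hOconv : Convex ℝ O := by
      rintro p ⟨hp1, hp2⟩ q ⟨hq1, hq2⟩ a c ha hc hac
      refine ⟨?_, ?_⟩
      · have htri := BPaux.l2_triangle (a • p.1) (c • q.1)
        rw [BPaux.l2_smul, BPaux.l2_smul, abs_of_nonneg ha, abs_of_nonneg hc] at htri
        calc l2 ((a • p + c • q).1) = l2 (a • p.1 + c • q.1) := rfl
          _ ≤ a * l2 p.1 + c * l2 q.1 := htri
          _ < δ := BPaux.convex_lt hp1 hq1 ha hc hac
      · show (a • p + c • q).2 < P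
        have : (a • p + c • q).2 = a * p.2 + c * q.2 := rfl
        rw [this]
        exact BPaux.convex_lt hp2 hq2 ha hc hac
    have hCconv : Convex ℝ C := by
      rintro p ⟨x1, hp1, hp2⟩ q ⟨x2, hq1, hq2⟩ a c ha hc hac
      refine ⟨a • x1 + c • x2, ?_, ?_⟩
      · show a • p.1 + c • q.1 = A.mulVec (a • x1 + c • x2) - b
        rw [hp1, hq1, Matrix.mulVec_add, BPaux.mulVec_real_smul, BPaux.mulVec_real_smul]
        have hb : a • b + c • b = b := by rw [← add_smul, hac, one_smul]
        conv_rhs => rw [← hb]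
        module
      · show l1 (a • x1 + c • x2) ≤ a * p.2 + c * q.2
        calc l1 (a • x1 + c • x2) ≤ a * l1 x1 + c * l1 x2 := BPaux.l1_convex x1 x2 a c ha hc
          _ ≤ a * p.2 + c * q.2 :=
            add_le_add (mul_le_mul_of_nonneg_left hp2 ha) (mul_le_mul_of_nonneg_left hq2 hc)
    have hdisj : Disjoint O C := by
      rw [Set.disjoint_left]
      rintro p ⟨hp1, hp2⟩ ⟨x, hx1, hx2⟩
      have hfeas : l2 (A.mulVec x - b) ≤ δ := by rw [← hx1]; exact hp1.le
      have := hxtmin x hfeas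
      linarith
    obtain ⟨f, u, hfO, hfC⟩ := geometric_hahn_banach_open hOconv hOopen hCconv hdisj
    set β := f (0, 1) with hβdef
    set g := f.comp (ContinuousLinearMap.inl ℝ (Fin m → ℂ) ℝ) with hgdef
    obtain ⟨y, hy⟩ := BPaux.repr_reInner g
    have hsplit : ∀ (z : Fin m → ℂ) (t : ℝ), f (z, t) = reInner y z + t * β := by
      intro z t
      have h1 : (z, t) = ((z, 0) : (Fin m → ℂ) × ℝ) + t • ((0 : Fin m → ℂ), (1 : ℝ)) := by
        simp [Prod.ext_iff]
      rw [h1, map_add]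
      have h2 : f (z, 0) = g z := by simp [hgdef]
      have h3 : f (t • ((0 : Fin m → ℂ), (1 : ℝ))) = t * β := by
        rw [f.map_smul, smul_eq_mul, ← hβdef]
      rw [h2, h3, hy z]
    have hA : ∀ (z : Fin m → ℂ) (t : ℝ), l2 z < δ → t < P → reInner y z + t * β < u := by
      intro z t h1 h2
      have := hfO (z, t) ⟨h1, h2⟩
      rwa [hsplit] at this
    have hB : ∀ x : Fin n → ℂ, u ≤ reInner y (A.mulVec x - b) + l1 x * β := by
      intro x
      have := hfC (A.mulVec x - b, l1 x) ⟨x, rfl, le_rfl⟩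
      rwa [hsplit] at this
    have hl2δ : l2 (0 : Fin m → ℂ) < δ := by rw [BPaux.l2_zero]; exact hδ
    -- β is nonnegative
    have hβ0 : 0 ≤ β := by
      by_contra hβ
      push_neg at hβ
      have hβne : β ≠ 0 := ne_of_lt hβ
      have ht1 : min (P - 1) (u / β - 1) < P := lt_of_le_of_lt (min_le_left _ _) (by linarith)
      have h := hA 0 _ hl2δ ht1
      rw [BPaux.reInner_zero_right, zero_add] at h
      have ht2 : min (P - 1) (u / β - 1) ≤ u / β - 1 := min_le_right _ _
      have h3 : (u / β - 1) * β ≤ min (P - 1) (u / β - 1) * β :=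
        mul_le_mul_of_nonpos_right ht2 hβ.le
      have h4 : (u / β - 1) * β = u - β := by field_simp
      linarith
    -- pass to the closed inequality in t
    have hA' : ∀ z : Fin m → ℂ, l2 z < δ → reInner y z + P * β ≤ u := by
      intro z hz
      rcases eq_or_lt_of_le hβ0 with hb0 | hbpos
      · have h := hA z (P - 1) hz (by linarith)
        rw [← hb0] at h ⊢
        simpa using h.le
      · by_contra hcon
        push_neg at hcon
        set ε := reInner y z + P * β - u with hε
        have hεpos : 0 < ε := by linarith
        have ht : P - ε / (2 * β) < P := by
          have : 0 < ε / (2 * β) := div_pos hεpos (by linarith)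
          linarith
        have h := hA z _ hz ht
        have hβne : β ≠ 0 := ne_of_gt hbpos
        have heq : (P - ε / (2 * β)) * β = P * β - ε / 2 := by
          field_simp
        rw [heq] at h
        linarith
    -- sup over the ball: δ * l2 y + P * β ≤ u
    have hkey2 : δ * l2 y + P * β ≤ u := by
      by_cases hyzero : y = 0
      · have h := hA' 0 hl2δ
        rw [BPaux.reInner_zero_right, zero_add] at h
        rw [hyzero, BPaux.l2_zero]
        linarith
      · have hly : 0 < l2 y := by
          rcases lt_or_eq_of_le (BPaux.l2_nonneg y) with h | h
          · exact h
          · exact absurd (BPaux.l2_eq_zero h.symm) hyzero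
        have hlyne : l2 y ≠ 0 := ne_of_gt hly
        have hstep : ∀ ε : ℝ, 0 < ε → ε < δ → (δ - ε) * l2 y + P * β ≤ u := by
          intro ε he1 he2
          set z := ((δ - ε) / l2 y) • y with hzdef
          have hcn : 0 ≤ (δ - ε) / l2 y := div_nonneg (by linarith) hly.le
          have hz : l2 z < δ := by
            rw [hzdef, BPaux.l2_smul, abs_of_nonneg hcn, div_mul_cancel₀ _ hlyne]
            linarith
          have h := hA' z hz
          have hri : reInner y z = (δ - ε) * l2 y := by
            rw [hzdef, BPaux.reInner_comm, BPaux.reInner_smul_left, BPaux.reInner_self]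
            field_simp
          rw [hri] at h
          exact h
        by_contra hcon
        push_neg at hcon
        set gap := δ * l2 y + P * β - u with hgap
        have hgappos : 0 < gap := by linarith
        set ε := min (gap / (2 * l2 y)) (δ / 2) with hεdef
        have hε1 : 0 < ε := lt_min (div_pos hgappos (by linarith)) (by linarith)
        have hε2 : ε < δ := lt_of_le_of_lt (min_le_right _ _) (by linarith)
        have h := hstep ε hε1 hε2
        have hb2 : ε * l2 y ≤ gap / 2 := by
          have h5 : ε ≤ gap / (2 * l2 y) := min_le_left _ _
          calc ε * l2 y ≤ gap / (2 * l2 y) * l2 y := mul_le_mul_of_nonneg_right h5 hly.le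
            _ = gap / 2 := by field_simp
        nlinarith
    -- β is positive (Slater)
    have hβpos : 0 < β := by
      rcases eq_or_lt_of_le hβ0 with hb0 | hbpos
      · exfalso
        have h0u : 0 < u := by
          have h := hA 0 (P - 1) hl2δ (by linarith)
          rw [BPaux.reInner_zero_right, ← hb0] at h
          simpa using h
        by_cases hyzero : y = 0
        · have h := hB x0
          rw [hyzero, BPaux.reInner_zero_left, ← hb0, mul_zero, add_zero] at h
          linarith
        · have hly : 0 < l2 y := by
            rcases lt_or_eq_of_le (BPaux.l2_nonneg y) with h | h
            · exact h
            · exact absurd (BPaux.l2_eq_zero h.symm) hyzero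
          have h := hB x0
          rw [← hb0, mul_zero, add_zero] at h
          have hlim : δ * l2 y ≤ u := by
            have := hkey2
            rw [← hb0, mul_zero, add_zero] at this
            exact this
          have hcs : reInner y (A.mulVec x0 - b) ≤ l2 y * l2 (A.mulVec x0 - b) :=
            BPaux.reInner_le _ _
          have hst : l2 y * l2 (A.mulVec x0 - b) < l2 y * δ := by
            exact mul_lt_mul_of_pos_left hx0 hly
          have hco : l2 y * δ = δ * l2 y := mul_comm _ _
          linarith
      · exact hbpos
    have hβne : β ≠ 0 := ne_of_gt hβpos
    have hβinv : 0 < β⁻¹ := inv_pos.mpr hβpos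
    -- normalize
    set w := β⁻¹ • y with hwdef
    have hl2w : l2 w = β⁻¹ * l2 y := by rw [hwdef, BPaux.l2_smul, abs_of_pos hβinv]
    have hM : ∀ x : Fin n → ℂ,
        δ * l2 w + P ≤ reInner x (Aᴴ.mulVec w) - reInner w b + l1 x := by
      intro x
      have h := le_trans hkey2 (hB x)
      have h2 := mul_le_mul_of_nonneg_left h hβinv.le
      have hL : β⁻¹ * (δ * l2 y + P * β) = δ * l2 w + P := by
        rw [hl2w]; field_simp; try ring
      have hR : β⁻¹ * (reInner y (A.mulVec x - b) + l1 x * β)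
          = reInner x (Aᴴ.mulVec w) - reInner w b + l1 x := by
        have h3 : β⁻¹ * reInner y (A.mulVec x - b) = reInner w (A.mulVec x - b) :=
          (BPaux.reInner_smul_left _ _ _).symm
        have h4 : reInner w (A.mulVec x - b) = reInner x (Aᴴ.mulVec w) - reInner w b := by
          rw [BPaux.reInner_sub_right, BPaux.reInner_comm w (A.mulVec x), BPaux.reInner_mulVec]
        have h5 : β⁻¹ * (l1 x * β) = l1 x := by field_simp
        rw [mul_add, h3, h4, h5]
      rw [hL, hR] at h2
      exact h2
    set v := Aᴴ.mulVec w with hvdef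
    -- dual feasibility
    have hfeas : ∀ j, ‖v j‖ ≤ 1 := by
      intro j
      by_contra hcon
      push_neg at hcon
      set D := ‖v j‖ - 1 with hD
      have hDpos : 0 < D := by linarith
      set L := δ * l2 w + P + reInner w b with hLdef
      set t := max 1 ((|L| + 1) / D) with htdef
      have ht1 : (0:ℝ) < t := lt_of_lt_of_le one_pos (le_max_left _ _)
      have htD : |L| + 1 ≤ t * D := by
        have h6 := le_max_right 1 ((|L| + 1) / D)
        calc |L| + 1 = (|L| + 1) / D * D := by field_simp
          _ ≤ t * D := mul_le_mul_of_nonneg_right h6 hDpos.le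
      have habsv : (0:ℝ) < ‖v j‖ := by linarith
      have habsne : (‖v j‖ : ℂ) ≠ 0 := by
        exact_mod_cast ne_of_gt habsv
      set x : Fin n → ℂ := Pi.single j ((((-t : ℝ)) : ℂ) * v j / ((‖v j‖ : ℝ) : ℂ))
        with hxdef
      have hl1x : l1 x = t := by
        rw [hxdef, BPaux.l1_single, norm_div, norm_mul, Complex.norm_real, Complex.norm_real,
            Real.norm_eq_abs, Real.norm_eq_abs,
          abs_neg, abs_of_pos ht1, abs_of_pos habsv, mul_div_assoc,
          div_self (ne_of_gt habsv), mul_one]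
      have hrx : reInner x v = -(t * ‖v j‖) := by
        rw [hxdef, BPaux.reInner_single_left]
        have hcc : (starRingEnd ℂ) (v j) * v j = ((Complex.normSq (v j) : ℝ) : ℂ) := by
          rw [mul_comm, Complex.mul_conj]
        have hc : (starRingEnd ℂ) ((((-t : ℝ)) : ℂ) * v j / ((‖v j‖ : ℝ) : ℂ)) * v j
            = ((-(t * ‖v j‖) : ℝ) : ℂ) := by
          rw [map_div₀, _root_.map_mul, Complex.conj_ofReal, Complex.conj_ofReal,
            div_mul_eq_mul_div, mul_assoc, hcc, Complex.normSq_eq_norm_sq]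
          push_cast
          field_simp
        rw [hc, Complex.ofReal_re]
      have h := hM x
      rw [hrx, hl1x] at h
      have htabs : t * ‖v j‖ = t * D + t := by rw [hD]; ring
      have hLL : L = δ * l2 w + P + reInner w b := hLdef
      linarith [neg_abs_le L, htD]
    refine ⟨-w, ?_, ?_⟩
    · apply BPaux.linf_le_one
      intro j
      rw [Matrix.mulVec_neg]
      simpa using hfeas j
    · have h0 := hM 0
      rw [BPaux.reInner_zero_left, BPaux.l1_zero] at h0
      have h1 : reInner b (-w) = -reInner w b := by
        rw [BPaux.reInner_comm, BPaux.reInner_neg_left]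
      rw [h1, BPaux.l2_neg]
      linarith
  -- conclude IsLUB
  constructor
  · rintro val ⟨y, hy1, rfl⟩
    have := BPaux.weak_duality A b δ xt y hxtS hy1
    linarith
  · intro c hc
    obtain ⟨Y, hY1, hY2⟩ := key
    have hmem : reInner b Y - δ * l2 Y ∈ {v : ℝ | ∃ y : Fin m → ℂ,
        linf (Aᴴ.mulVec y) ≤ 1 ∧ v = reInner b y - δ * l2 y} := ⟨Y, hY1, rfl⟩
    exact le_trans hY2 (hc hmem)
end

section
/- Let A ∈ ℂ^{m×n} satisfy A A* = I, let b ∈ ℂ^m, β > 0 and γ > 0. Consider the iteration: given (x^k, y^k), set z^{k+1} = P_{B₁^∞}(A*y^k + x^k/β), then y^{k+1} = A z^{k+1} − (A x^k − b)/β, then x^{k+1} = x^k − γβ(z^{k+1} − A*y^{k+1}). Then for every k ≥ 0, A x^{k+1} − b = (1−γ)(A x^k − b); consequently ‖A x^k − b‖₂ = |1−γ|^k · ‖A x^0 − b‖₂ for all k, so the residual decreases geometrically whenever 0 < γ < 2. -/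
open Filter Topology Matrix Finset

lemma l2_real_smul {ι : Type*} [Fintype ι] (r : ℝ) (v : ι → ℂ) :
    l2 (r • v) = |r| * l2 v := by
  unfold l2 l2sq
  have h : ∀ i, (‖(r • v) i‖)^2 = r^2 * (‖v i‖)^2 := by
    intro i
    simp [Pi.smul_apply, norm_smul, mul_pow, sq_abs]
  simp_rw [h]
  rw [← Finset.mul_sum, Real.sqrt_mul (sq_nonneg r), Real.sqrt_sq_eq_abs]

/-- For the dual ADM (2.31) applied to basis pursuit with AA* = I, the residual
satisfies A x^{k+1} − b = (1−γ)(A x^k − b), hence ‖A x^k − b‖₂ = |1−γ|^k ‖A x^0 − b‖₂. -/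
theorem dadm_bp_residual_geometric {m n : ℕ} (A : Matrix (Fin m) (Fin n) ℂ)
    (hA : A * Aᴴ = 1) (b : Fin m → ℂ) (β γ : ℝ) (hβ : 0 < β) (hγ : 0 < γ)
    (x : ℕ → Fin n → ℂ) (y : ℕ → Fin m → ℂ) (z : ℕ → Fin n → ℂ)
    (hz : ∀ k, z (k+1) = projBox (Aᴴ.mulVec (y k) + (1/β) • x k))
    (hy : ∀ k, y (k+1) = A.mulVec (z (k+1)) - (1/β) • (A.mulVec (x k) - b))
    (hx : ∀ k, x (k+1) = x k - (γ * β) • (z (k+1) - Aᴴ.mulVec (y (k+1)))) :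
    (∀ k : ℕ, A.mulVec (x (k+1)) - b = (1 - γ) • (A.mulVec (x k) - b)) ∧
    (∀ k : ℕ, l2 (A.mulVec (x k) - b) = |1 - γ| ^ k * l2 (A.mulVec (x 0) - b)) := by
  have hAA : ∀ w : Fin m → ℂ, A.mulVec (Aᴴ.mulVec w) = w := by
    intro w; rw [Matrix.mulVec_mulVec, hA, Matrix.one_mulVec]
  have h1 : ∀ k : ℕ, A.mulVec (x (k+1)) - b = (1 - γ) • (A.mulVec (x k) - b) := by
    intro k
    rw [hx k, hy k, Matrix.mulVec_sub, Matrix.mulVec_smul, Matrix.mulVec_sub, hAA]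
    funext i
    simp only [Pi.sub_apply, Pi.smul_apply, Complex.real_smul, Complex.ofReal_mul,
      Complex.ofReal_sub, Complex.ofReal_one, Complex.ofReal_div]
    have hb : (β : ℂ) ≠ 0 := by exact_mod_cast hβ.ne'
    field_simp
    ring
  refine ⟨h1, ?_⟩
  intro k
  induction k with
  | zero => simp
  | succ k ih =>
    rw [h1 k, l2_real_smul, ih, pow_succ]
    ring
end

section
/- Let A ∈ ℂ^{m×n}, b ∈ ℂ^m and ν > 0. Define Â ∈ ℂ^{m×(n+m)} as the block matrix (A, νI)/√(1+ν²) and b̂ = ν b/√(1+ν²). Then: (i) for every x ∈ ℂ^n and r ∈ ℂ^m, A x + r = b if and only if Â(νx; r) = b̂, and ‖(νx; r)‖₁ = ν‖x‖₁ + ‖r‖₁; (ii) x ∈ ℂ^n minimizes ‖x‖₁ + (1/ν)‖A x − b‖₁ over ℂ^n if and only if x̂ = (νx; b − A x) minimizes ‖x̂‖₁ over {x̂ ∈ ℂ^{n+m} : Â x̂ = b̂}, and in that case ν·(‖x‖₁ + (1/ν)‖A x − b‖₁) equals min{‖x̂‖₁ : Â x̂ = b̂}; (iii) if A A* = I (m×m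 identity), then Â Â* = I. -/
open Filter Topology Matrix Finset

lemma l1_sum_elim {n m : ℕ} (ν : ℝ) (hν : 0 ≤ ν) (x : Fin n → ℂ) (r : Fin m → ℂ) :
    l1 (Sum.elim (ν • x) r) = ν * l1 x + l1 r := by
  simp [l1, Fintype.sum_sum_type, Complex.real_smul, _root_.map_mul, Complex.norm_real,
    abs_of_nonneg hν, Finset.mul_sum]

lemma l1_sub_comm {k : ℕ} (u v : Fin k → ℂ) : l1 (u - v) = l1 (v - u) := by
  simp only [l1]
  exact Finset.sum_congr rfl fun i _ => by
    simpa using (norm_sub_rev (u i) (v i))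

lemma key_mulVec {m n : ℕ} (A : Matrix (Fin m) (Fin n) ℂ) (ν : ℝ) (x : Fin n → ℂ)
    (r : Fin m → ℂ) :
    ((Real.sqrt (1 + ν^2))⁻¹ •
      Matrix.fromCols A ((ν : ℂ) • (1 : Matrix (Fin m) (Fin m) ℂ))).mulVec
        (Sum.elim (ν • x) r)
    = (ν / Real.sqrt (1 + ν^2)) • (A.mulVec x + r) := by
  rw [Matrix.smul_mulVec, fromCols_mulVec_sumElim, Matrix.smul_mulVec,
    Matrix.one_mulVec, Matrix.mulVec_smul]
  funext i
  simp [Complex.real_smul, Pi.smul_apply, smul_eq_mul]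
  ring

/-- Reformulation (3.2) of the ℓ1/ℓ1 model (1.6) as a basis pursuit problem. -/
theorem l1l1_as_bp {m n : ℕ} (A : Matrix (Fin m) (Fin n) ℂ) (b : Fin m → ℂ)
    (ν : ℝ) (hν : 0 < ν)
    (Ahat : Matrix (Fin m) (Fin n ⊕ Fin m) ℂ)
    (hAhat : Ahat = (Real.sqrt (1 + ν^2))⁻¹ •
      Matrix.fromCols A ((ν : ℂ) • (1 : Matrix (Fin m) (Fin m) ℂ)))
    (bhat : Fin m → ℂ) (hbhat : bhat = (ν / Real.sqrt (1 + ν^2)) • b) :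
    (∀ (x : Fin n → ℂ) (r : Fin m → ℂ),
      (A.mulVec x + r = b ↔ Ahat.mulVec (Sum.elim (ν • x) r) = bhat) ∧
      l1 (Sum.elim (ν • x) r) = ν * l1 x + l1 r) ∧
    (∀ x : Fin n → ℂ,
      ((∀ x' : Fin n → ℂ,
          l1 x + (1/ν) * l1 (A.mulVec x - b) ≤ l1 x' + (1/ν) * l1 (A.mulVec x' - b)) ↔
        (Ahat.mulVec (Sum.elim (ν • x) (b - A.mulVec x)) = bhat ∧
          ∀ xh : Fin n ⊕ Fin m → ℂ, Ahat.mulVec xh = bhat →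
            l1 (Sum.elim (ν • x) (b - A.mulVec x)) ≤ l1 xh)) ∧
      ((∀ x' : Fin n → ℂ,
          l1 x + (1/ν) * l1 (A.mulVec x - b) ≤ l1 x' + (1/ν) * l1 (A.mulVec x' - b)) →
        ν * (l1 x + (1/ν) * l1 (A.mulVec x - b)) =
          l1 (Sum.elim (ν • x) (b - A.mulVec x)))) ∧
    (A * Aᴴ = 1 → Ahat * Ahatᴴ = 1) := by
  have hc : (0:ℝ) < Real.sqrt (1 + ν^2) := Real.sqrt_pos.mpr (by positivity)
  have hne : (ν / Real.sqrt (1 + ν^2)) ≠ 0 := by positivity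
  have hiff : ∀ (x : Fin n → ℂ) (r : Fin m → ℂ),
      A.mulVec x + r = b ↔ Ahat.mulVec (Sum.elim (ν • x) r) = bhat := by
    intro x r
    rw [hAhat, hbhat, key_mulVec]
    constructor
    · intro h; rw [h]
    · intro h; exact smul_right_injective (Fin m → ℂ) hne h
  have hval : ∀ x : Fin n → ℂ, l1 (Sum.elim (ν • x) (b - A.mulVec x)) =
      ν * (l1 x + (1/ν) * l1 (A.mulVec x - b)) := by
    intro x
    rw [l1_sum_elim ν hν.le, l1_sub_comm]
    field_simp
  have hfeas : ∀ x : Fin n → ℂ,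
      Ahat.mulVec (Sum.elim (ν • x) (b - A.mulVec x)) = bhat := by
    intro x
    exact (hiff x (b - A.mulVec x)).mp (by abel)
  refine ⟨fun x r => ⟨hiff x r, l1_sum_elim ν hν.le x r⟩, fun x => ⟨?_, ?_⟩, ?_⟩
  · constructor
    · intro hmin
      refine ⟨hfeas x, fun xh hxh => ?_⟩
      set x' : Fin n → ℂ := ν⁻¹ • (xh ∘ Sum.inl) with hx'
      have hdecomp : xh = Sum.elim (ν • x') (xh ∘ Sum.inr) := by
        funext s
        cases s with
        | inl i => simp [hx', smul_inv_smul₀ hν.ne']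
        | inr j => simp
      rw [hdecomp] at hxh
      have hv : A.mulVec x' + (xh ∘ Sum.inr) = b := (hiff x' _).mpr hxh
      have hv' : (xh ∘ Sum.inr) = b - A.mulVec x' := eq_sub_of_add_eq' hv
      rw [hdecomp, hv', hval x', hval x]
      exact mul_le_mul_of_nonneg_left (hmin x') hν.le
    · rintro ⟨_, hminh⟩ x'
      have h := hminh (Sum.elim (ν • x') (b - A.mulVec x')) (hfeas x')
      rw [hval x, hval x'] at h
      exact le_of_mul_le_mul_left h hν
  · intro _
    exact (hval x).symm
  · intro hA
    have hc2 : (Real.sqrt (1 + ν^2))^2 = 1 + ν^2 := Real.sq_sqrt (by positivity)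
    rw [hAhat, Matrix.conjTranspose_smul, conjTranspose_fromCols_eq_fromRows_conjTranspose,
      Matrix.conjTranspose_smul, Matrix.conjTranspose_one, Matrix.smul_mul, Matrix.mul_smul,
      fromCols_mul_fromRows, hA, Matrix.smul_mul, Matrix.mul_smul, one_mul]
    simp only [star_trivial, Complex.star_def, Complex.conj_ofReal]
    ext i j
    rcases eq_or_ne i j with h | h
    · subst h
      simp only [Matrix.smul_apply, Matrix.add_apply, Matrix.one_apply_eq, smul_eq_mul,
        Complex.real_smul]
      have hcc : ((Real.sqrt (1+ν^2) : ℝ) : ℂ) ≠ 0 := by exact_mod_cast hc.ne'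
      field_simp
      norm_cast
      rw [one_div, inv_pow, hc2]
      exact inv_mul_cancel₀ (by positivity)
    · simp [Matrix.one_apply_ne h]
end
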